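/- arXiv:2309.16594 — 5 statements merged into one kernel-verified Lean document; each statement's English description precedes it below -/
import Mathlib

section
/- Let G = (V,E) be a directed graph with |V| = n ≥ 1 and let h, τ be integers with 1 ≤ h ≤ n and 1 ≤ τ ≤ n. Then there exist a set C ⊆ V with |C| ≤ 2n/τ and a family Π containing, for some ordered pairs (s,t) ∈ V × V, at most one path π_{s,t} from s to t in G, such that: (a) for all s,t ∈ V with δ_{G−C}^h(s,t) < ∞, the path π_{s,t} is defined and has length at most δ_{G−C}^h(s,t); and (b) every vertex u ∈ V lies on at most 2nhτ of the paths of Π. -/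
open scoped Classical

namespace Paper

variable {V : Type*}

/-- `p` (restricted to indices `0,…,k`) is a walk of length `k` w.r.t. the edge relation `E`. -/
def IsWalk (E : V → V → Prop) (k : ℕ) (p : ℕ → V) : Prop :=
  ∀ i, i < k → E (p i) (p (i + 1))

/-- The `h`-bounded distance `δ_G^h(s,t)`: the minimum number of edges of a walk from `s`
to `t` with at most `h` edges (`⊤` if none exists). -/
noncomputable def bdist (E : V → V → Prop) (h : ℕ) (s t : V) : ℕ∞ :=
  ⨅ (k : ℕ) (_ : k ≤ h ∧ ∃ p : ℕ → V, p 0 = s ∧ p k = t ∧ IsWalk E k p), (k : ℕ∞)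

/-- The graph `G − D`: all edges incident to `D` are removed. -/
def delV (E : V → V → Prop) (D : Set V) : V → V → Prop :=
  fun u v => E u v ∧ u ∉ D ∧ v ∉ D

/-- A (simple) path in the graph with edge relation `E`: a walk with pairwise distinct
vertices; `len` is its number of edges. -/
structure Path (E : V → V → Prop) where
  len : ℕ
  vtx : ℕ → V
  isWalk : IsWalk E len vtx
  inj : ∀ i ≤ len, ∀ j ≤ len, vtx i = vtx j → i = j

/-- Every walk can be shortcut to an injective walk with the same endpoints. -/
lemma exists_injective_walk (E : V → V → Prop) :
    ∀ k : ℕ, ∀ p : ℕ → V, IsWalk E k p →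
      ∃ k' ≤ k, ∃ q : ℕ → V, q 0 = p 0 ∧ q k' = p k ∧ IsWalk E k' q ∧
        ∀ a ≤ k', ∀ b ≤ k', q a = q b → a = b := by
  intro k
  induction k using Nat.strong_induction_on with
  | _ k ih =>
    intro p hp
    by_cases hinj : ∀ a ≤ k, ∀ b ≤ k, p a = p b → a = b
    · exact ⟨k, le_rfl, p, rfl, rfl, hp, hinj⟩
    · push_neg at hinj
      obtain ⟨a, ha, b, hb, hab, hne⟩ := hinj
      -- wlog i < j with p i = p j
      obtain ⟨i, j, hij, hi, hj, hpij⟩ :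
          ∃ i j : ℕ, i < j ∧ i ≤ k ∧ j ≤ k ∧ p i = p j := by
        rcases lt_or_gt_of_ne hne with hlt | hgt
        · exact ⟨a, b, hlt, ha, hb, hab⟩
        · exact ⟨b, a, hgt, hb, ha, hab.symm⟩
      set q : ℕ → V := fun m => if m ≤ i then p m else p (m + (j - i)) with hq
      set k' : ℕ := k - (j - i) with hk'
      have hwq : IsWalk E k' q := by
        intro m hm
        rcases Nat.lt_or_ge m i with hmi | hmi
        · have h1 : m ≤ i := hmi.le
          have h2 : m + 1 ≤ i := hmi
          simp only [hq, if_pos h1, if_pos h2]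
          exact hp m (by omega)
        · rcases Nat.eq_or_lt_of_le hmi with hmi' | hmi'
          · subst hmi'
            have h1 : i ≤ i := le_rfl
            have h2 : ¬ (i + 1 ≤ i) := by omega
            simp only [hq, if_pos h1, if_neg h2]
            have heq : i + 1 + (j - i) = j + 1 := by omega
            rw [heq, hpij]
            exact hp j (by omega)
          · have h1 : ¬ (m ≤ i) := by omega
            have h2 : ¬ (m + 1 ≤ i) := by omega
            simp only [hq, if_pos, if_neg h1, if_neg h2]
            have : m + 1 + (j - i) = m + (j - i) + 1 := by omega
            rw [this]
            exact hp (m + (j - i)) (by omega)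
      have hq0 : q 0 = p 0 := by simp [hq]
      have hqk : q k' = p k := by
        rcases Nat.lt_or_ge i k' with hik | hik
        · have h1 : ¬ (k' ≤ i) := by omega
          simp only [hq, if_neg h1]
          congr 1
          omega
        · have hji : j = k := by omega
          have h2 : k' = i := by omega
          simp only [hq, h2, if_pos le_rfl]
          rw [hpij, hji]
      obtain ⟨k'', hk'', q', hq'0, hq'k, hwq', hinj'⟩ := ih k' (by omega) q hwq
      exact ⟨k'', by omega, q', by rw [hq'0, hq0], by rw [hq'k, hqk], hwq', hinj'⟩

lemma bdist_le {E : V → V → Prop} {h k : ℕ} {s t : V} {p : ℕ → V}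
    (hk : k ≤ h) (h0 : p 0 = s) (hkt : p k = t) (hw : IsWalk E k p) :
    bdist E h s t ≤ (k : ℕ∞) :=
  iInf₂_le k ⟨hk, p, h0, hkt, hw⟩

lemma bdist_anti {E₁ E₂ : V → V → Prop} (hle : ∀ u v, E₁ u v → E₂ u v)
    (h : ℕ) (s t : V) : bdist E₂ h s t ≤ bdist E₁ h s t := by
  refine le_iInf₂ fun k hk => ?_
  obtain ⟨hkh, p, h0, hkt, hw⟩ := hk
  exact bdist_le hkh h0 hkt (fun i hi => hle _ _ (hw i hi))

lemma exists_path_of_bdist_ne_top {E E' : V → V → Prop}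
    (hle : ∀ u v, E' u v → E u v) {h : ℕ} {s t : V}
    (hne : bdist E' h s t ≠ ⊤) :
    ∃ p : Path E, p.vtx 0 = s ∧ p.vtx p.len = t ∧ p.len ≤ h ∧
      (p.len : ℕ∞) ≤ bdist E' h s t ∧ IsWalk E' p.len p.vtx := by
  set S : Set ℕ := {k | k ≤ h ∧ ∃ p : ℕ → V, p 0 = s ∧ p k = t ∧ IsWalk E' k p} with hS
  have hSne : S.Nonempty := by
    by_contra hc
    apply hne
    rw [bdist]
    exact iInf_eq_top.mpr fun k => iInf_eq_top.mpr fun hk => (hc ⟨k, hk⟩).elim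
  set k₀ := sInf S with hk₀
  have hk₀mem : k₀ ∈ S := Nat.sInf_mem hSne
  have hk₀le : (k₀ : ℕ∞) ≤ bdist E' h s t := by
    refine le_iInf₂ fun k hk => ?_
    exact_mod_cast Nat.cast_le.mpr (Nat.sInf_le hk)
  obtain ⟨hk₀h, p, h0, hkt, hw⟩ := hk₀mem
  obtain ⟨k', hk', q, hq0, hqk, hwq, hinj⟩ := exists_injective_walk E' k₀ p hw
  refine ⟨⟨k', q, fun i hi => hle _ _ (hwq i hi), hinj⟩, ?_, ?_, ?_, ?_, hwq⟩
  · show q 0 = s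
    rw [hq0, h0]
  · show q k' = t
    rw [hqk, hkt]
  · show k' ≤ h
    omega
  · show (k' : ℕ∞) ≤ bdist E' h s t
    exact le_trans (Nat.cast_le.mpr hk') hk₀le

section Build

variable [Fintype V]

noncomputable def congSet (E : V → V → Prop) (f : V × V → Option (Path E)) (u : V) :
    Finset (V × V) :=
  Finset.univ.filter fun q => ∃ p, f q = some p ∧ ∃ i ≤ p.len, p.vtx i = u

noncomputable def Cset (E : V → V → Prop) (T : ℕ) (f : V × V → Option (Path E)) : Set V :=
  {u | T ≤ (congSet E f u).card}

noncomputable def build (E : V → V → Prop) (h T : ℕ) : List (V × V) → V × V → Option (Path E)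
  | [], _ => none
  | q :: L, q' =>
    if q' = q then
      if hne : bdist (delV E (Cset E T (build E h T L))) h q.1 q.2 ≠ ⊤ then
        some (exists_path_of_bdist_ne_top (fun _ _ hv => hv.1) hne).choose
      else none
    else build E h T L q'

lemma build_cons (E : V → V → Prop) (h T : ℕ) (q : V × V) (L : List (V × V)) (q' : V × V) :
    build E h T (q :: L) q' =
      if q' = q then
        if hne : bdist (delV E (Cset E T (build E h T L))) h q.1 q.2 ≠ ⊤ then
          some (exists_path_of_bdist_ne_top (fun _ _ hv => hv.1) hne).choose
        else none
      else build E h T L q' := rfl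

lemma build_not_mem (E : V → V → Prop) (h T : ℕ) :
    ∀ (L : List (V × V)) (q' : V × V), q' ∉ L → build E h T L q' = none := by
  intro L
  induction L with
  | nil => intro q' _; rfl
  | cons q L ih =>
    intro q' hq'
    rw [build_cons, if_neg (by simp at hq'; exact hq'.1)]
    exact ih q' (by simp at hq'; exact hq'.2)

lemma build_suffix (E : V → V → Prop) (h T : ℕ) :
    ∀ (L L' : List (V × V)), L' <:+ L → L.Nodup → ∀ q p,
      build E h T L' q = some p → build E h T L q = some p := by
  intro L
  induction L with
  | nil => intro L' hs _ q p hp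
           rw [List.suffix_nil.mp hs] at hp; exact hp
  | cons a t ih =>
    intro L' hs hnd q p hp
    rcases List.suffix_cons_iff.mp hs with h1 | h1
    · rw [← h1]; exact hp
    · have ht : build E h T t q = some p := ih L' h1 (List.nodup_cons.mp hnd).2 q p hp
      have hqt : q ∈ t := by
        by_contra hq
        rw [build_not_mem E h T t q hq] at ht; exact Option.some_ne_none _ ht.symm
      have hqa : q ≠ a := fun he => (List.nodup_cons.mp hnd).1 (he ▸ hqt)
      rw [build_cons, if_neg hqa]; exact ht

lemma congSet_suffix (E : V → V → Prop) (h T : ℕ) {L L' : List (V × V)}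
    (hs : L' <:+ L) (hnd : L.Nodup) (u : V) :
    congSet E (build E h T L') u ⊆ congSet E (build E h T L) u := by
  intro q hq
  rw [congSet, Finset.mem_filter] at hq ⊢
  obtain ⟨_, p, hp, hi⟩ := hq
  exact ⟨Finset.mem_univ _, p, build_suffix E h T L L' hs hnd q p hp, hi⟩

lemma Cset_suffix (E : V → V → Prop) (h T : ℕ) {L L' : List (V × V)}
    (hs : L' <:+ L) (hnd : L.Nodup) :
    Cset E T (build E h T L') ⊆ Cset E T (build E h T L) := fun u hu =>
  le_trans hu (Finset.card_le_card (congSet_suffix E h T hs hnd u))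

lemma build_drop (E : V → V → Prop) (h T : ℕ) :
    ∀ (L₁ : List (V × V)) (M : List (V × V)) (q : V × V), q ∉ L₁ →
      build E h T (L₁ ++ M) q = build E h T M q := by
  intro L₁
  induction L₁ with
  | nil => intros; rfl
  | cons a t ih =>
    intro M q hq
    rw [List.cons_append, build_cons, if_neg (by simp at hq; exact hq.1)]
    exact ih M q (by simp at hq; exact hq.2)

/-- Endpoints and length bound for any assigned path. -/
lemma build_spec (E : V → V → Prop) (h T : ℕ) :
    ∀ (L : List (V × V)) (q : V × V) (p : Path E), build E h T L q = some p →
      p.vtx 0 = q.1 ∧ p.vtx p.len = q.2 ∧ p.len ≤ h := by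
  intro L
  induction L with
  | nil => intro q p hp; exact (Option.some_ne_none _ hp.symm).elim
  | cons a t ih =>
    intro q p hp
    rw [build_cons] at hp
    by_cases hqa : q = a
    · rw [if_pos hqa] at hp
      split at hp
      · rename_i hne
        obtain ⟨h1, h2, h3, _, _⟩ :=
          (exists_path_of_bdist_ne_top (fun _ _ hv => hv.1) hne).choose_spec
        rw [Option.some_inj] at hp
        subst hp
        exact ⟨hqa ▸ h1, hqa ▸ h2, h3⟩
      · exact (Option.some_ne_none _ hp.symm).elim
    · rw [if_neg hqa] at hp
      exact ih q p hp

/-- Full specification of the path chosen at the head of the list. -/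
lemma build_head_spec (E : V → V → Prop) (h T : ℕ) (q : V × V) (L : List (V × V))
    (p : Path E) (hp : build E h T (q :: L) q = some p) :
    p.vtx 0 = q.1 ∧ p.vtx p.len = q.2 ∧ p.len ≤ h ∧
      (p.len : ℕ∞) ≤ bdist (delV E (Cset E T (build E h T L))) h q.1 q.2 ∧
      IsWalk (delV E (Cset E T (build E h T L))) p.len p.vtx := by
  rw [build_cons, if_pos rfl] at hp
  split at hp
  · rename_i hne
    obtain ⟨h1, h2, h3, h4, h5⟩ :=
      (exists_path_of_bdist_ne_top (fun _ _ hv => hv.1) hne).choose_spec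
    rw [Option.some_inj] at hp
    subst hp
    exact ⟨h1, h2, h3, h4, h5⟩
  · exact (Option.some_ne_none _ hp.symm).elim

lemma walk_vtx_not_mem {E : V → V → Prop} {C : Set V} {k : ℕ} {p : ℕ → V}
    (hw : IsWalk (delV E C) k p) (hk : 1 ≤ k) {i : ℕ} (hi : i ≤ k) : p i ∉ C := by
  rcases Nat.lt_or_ge i k with hik | hik
  · exact (hw i hik).2.1
  · have : i = k := by omega
    subst this
    have := (hw (i - 1) (by omega)).2.2
    have heq : i - 1 + 1 = i := by omega
    rwa [heq] at this

noncomputable def congSet1 (E : V → V → Prop) (f : V × V → Option (Path E)) (u : V) :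
    Finset (V × V) :=
  Finset.univ.filter fun q => ∃ p, f q = some p ∧ 1 ≤ p.len ∧ ∃ i ≤ p.len, p.vtx i = u

lemma congSet1_subset (E : V → V → Prop) (f : V × V → Option (Path E)) (u : V) :
    congSet1 E f u ⊆ congSet E f u := by
  intro q hq
  rw [congSet1, Finset.mem_filter] at hq
  rw [congSet, Finset.mem_filter]
  obtain ⟨_, p, hp, _, hi⟩ := hq
  exact ⟨Finset.mem_univ _, p, hp, hi⟩

lemma congSet1_card_le (E : V → V → Prop) (h T : ℕ) (hT : 1 ≤ T) :
    ∀ (L : List (V × V)) (u : V), (congSet1 E (build E h T L) u).card ≤ T := by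
  intro L
  induction L with
  | nil =>
    intro u
    have : congSet1 E (build E h T []) u = ∅ := by
      rw [congSet1]
      refine Finset.filter_false_of_mem fun q _ => ?_
      rintro ⟨p, hp, _⟩
      exact Option.some_ne_none _ hp.symm
    rw [this]; simp [hT]
  | cons a L ih =>
    intro u
    by_cases hC : u ∈ Cset E T (build E h T L)
    · -- congested: the new path (if it goes through u) has length ≥ 1, impossible
      have hsub : congSet1 E (build E h T (a :: L)) u ⊆ congSet1 E (build E h T L) u := by
        intro q hq
        rw [congSet1, Finset.mem_filter] at hq ⊢
        obtain ⟨_, p, hp, hlen, i, hi, hvi⟩ := hq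
        by_cases hqa : q = a
        · subst hqa
          exfalso
          obtain ⟨_, _, _, _, hwalk⟩ := build_head_spec E h T q L p hp
          exact walk_vtx_not_mem hwalk hlen hi (hvi ▸ hC)
        · rw [build_cons, if_neg hqa] at hp
          exact ⟨Finset.mem_univ _, p, hp, hlen, i, hi, hvi⟩
      exact le_trans (Finset.card_le_card hsub) (ih u)
    · -- not congested: card so far < T, so adding one pair is fine
      have hlt : (congSet E (build E h T L) u).card < T := by
        rw [Cset, Set.mem_setOf_eq, not_le] at hC; exact hC
      have hsub : congSet1 E (build E h T (a :: L)) u ⊆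
          insert a (congSet1 E (build E h T L) u) := by
        intro q hq
        by_cases hqa : q = a
        · subst hqa; exact Finset.mem_insert_self _ _
        · refine Finset.mem_insert_of_mem ?_
          rw [congSet1, Finset.mem_filter] at hq ⊢
          obtain ⟨_, p, hp, hrest⟩ := hq
          rw [build_cons, if_neg hqa] at hp
          exact ⟨Finset.mem_univ _, p, hp, hrest⟩
      calc (congSet1 E (build E h T (a :: L)) u).card
          ≤ (insert a (congSet1 E (build E h T L) u)).card := Finset.card_le_card hsub
        _ ≤ (congSet1 E (build E h T L) u).card + 1 := Finset.card_insert_le _ _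
        _ ≤ (congSet E (build E h T L) u).card + 1 :=
            Nat.add_le_add_right (Finset.card_le_card (congSet1_subset E _ u)) 1
        _ ≤ T := hlt

lemma congSet_card_le (E : V → V → Prop) (h T : ℕ) (hT : 1 ≤ T) (L : List (V × V)) (u : V) :
    (congSet E (build E h T L) u).card ≤ T + 1 := by
  have hsub : congSet E (build E h T L) u ⊆
      insert (u, u) (congSet1 E (build E h T L) u) := by
    intro q hq
    rw [congSet, Finset.mem_filter] at hq
    obtain ⟨_, p, hp, i, hi, hvi⟩ := hq
    by_cases hlen : 1 ≤ p.len
    · exact Finset.mem_insert_of_mem (by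
        rw [congSet1, Finset.mem_filter]
        exact ⟨Finset.mem_univ _, p, hp, hlen, i, hi, hvi⟩)
    · have hl0 : p.len = 0 := by omega
      have hi0 : i = 0 := by omega
      obtain ⟨he1, he2, _⟩ := build_spec E h T L q p hp
      have hq1 : q.1 = u := by rw [← he1, ← hi0, hvi]
      have hq2 : q.2 = u := by rw [← he2, hl0, ← hi0, hvi]
      have : q = (u, u) := Prod.ext hq1 hq2
      rw [this]; exact Finset.mem_insert_self _ _
  calc (congSet E (build E h T L) u).card
      ≤ (insert (u, u) (congSet1 E (build E h T L) u)).card := Finset.card_le_card hsub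
    _ ≤ (congSet1 E (build E h T L) u).card + 1 := Finset.card_insert_le _ _
    _ ≤ T + 1 := Nat.add_le_add_right (congSet1_card_le E h T hT L u) 1

lemma sum_congSet_card_le (E : V → V → Prop) (h T : ℕ) (hh : 1 ≤ h) (L : List (V × V)) :
    ∑ u : V, (congSet E (build E h T L) u).card ≤ Fintype.card (V × V) * (h + 1) := by
  set f := build E h T L with hf
  have hswap : ∑ u : V, (congSet E f u).card =
      ∑ q : V × V, (Finset.univ.filter fun u : V =>
        ∃ p, f q = some p ∧ ∃ i ≤ p.len, p.vtx i = u).card := by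
    simp only [congSet, Finset.card_filter]
    rw [Finset.sum_comm]
  rw [hswap]
  have hbound : ∀ q : V × V, (Finset.univ.filter fun u : V =>
      ∃ p, f q = some p ∧ ∃ i ≤ p.len, p.vtx i = u).card ≤ h + 1 := by
    intro q
    rcases hfq : f q with _ | p
    · have : (Finset.univ.filter fun u : V =>
          ∃ p, (none : Option (Path E)) = some p ∧ ∃ i ≤ p.len, p.vtx i = u) = ∅ := by
        refine Finset.filter_false_of_mem fun u _ => ?_
        rintro ⟨p, hp, _⟩
        exact Option.some_ne_none _ hp.symm
      rw [this]; simp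
    · have hsub : (Finset.univ.filter fun u : V =>
          ∃ p', some p = some p' ∧ ∃ i ≤ p'.len, p'.vtx i = u) ⊆
          (Finset.range (p.len + 1)).image p.vtx := by
        intro u hu
        rw [Finset.mem_filter] at hu
        obtain ⟨_, p', hp', i, hi, hvi⟩ := hu
        rw [Option.some_inj] at hp'
        subst hp'
        exact Finset.mem_image.mpr ⟨i, Finset.mem_range.mpr (by omega), hvi⟩
      calc _ ≤ ((Finset.range (p.len + 1)).image p.vtx).card := Finset.card_le_card hsub
        _ ≤ (Finset.range (p.len + 1)).card := Finset.card_image_le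
        _ = p.len + 1 := Finset.card_range _
        _ ≤ h + 1 := by
            have := (build_spec E h T L q p hfq).2.2
            omega
  calc ∑ q : V × V, _ ≤ ∑ _q : V × V, (h + 1) := Finset.sum_le_sum fun q _ => hbound q
    _ = Fintype.card (V × V) * (h + 1) := by
        rw [Finset.sum_const, Finset.card_univ, smul_eq_mul]

end Build

/-- **Lemma 3.1 (combinatorial content).** For a digraph `G` on `n ≥ 1` vertices and
parameters `1 ≤ h ≤ n`, `1 ≤ τ ≤ n` there exist a congested set `C` with `|C| ≤ 2n/τ` and a
collection `Π` of paths of `G` (at most one path `π_{s,t}` per ordered pair `(s,t)`) such that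
(a) whenever `δ_{G−C}^h(s,t) < ∞`, the path `π_{s,t}` exists and `|π_{s,t}| ≤ δ_{G−C}^h(s,t)`,
and (b) every vertex lies on at most `2nhτ` paths of `Π`. -/
theorem collection_congested {V : Type*} [Fintype V]
    (E : V → V → Prop) (n h τ : ℕ)
    (hn : Fintype.card V = n) (hn1 : 1 ≤ n)
    (hh1 : 1 ≤ h) (hhn : h ≤ n) (hτ1 : 1 ≤ τ) (hτn : τ ≤ n) :
    ∃ (C : Set V) (π : V → V → Option (Path E)),
      ((C.ncard : ℝ) ≤ 2 * (n : ℝ) / (τ : ℝ)) ∧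
      (∀ s t : V, ∀ p, π s t = some p → p.vtx 0 = s ∧ p.vtx p.len = t) ∧
      (∀ s t : V, bdist (delV E C) h s t ≠ ⊤ →
        ∃ p, π s t = some p ∧ (p.len : ℕ∞) ≤ bdist (delV E C) h s t) ∧
      (∀ u : V,
        ({q : V × V | ∃ p, π q.1 q.2 = some p ∧ ∃ i ≤ p.len, p.vtx i = u}).ncard
          ≤ 2 * n * h * τ) := by
  set T : ℕ := n * h * τ with hTdef
  have hT1 : 1 ≤ T := by
    rw [hTdef]; exact Nat.one_le_iff_ne_zero.mpr (by positivity)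
  set L : List (V × V) := (Finset.univ : Finset (V × V)).toList with hLdef
  have hnd : L.Nodup := Finset.nodup_toList _
  set f : V × V → Option (Path E) := build E h T L with hfdef
  refine ⟨Cset E T f, fun s t => f (s, t), ?_, ?_, ?_, ?_⟩
  · -- cardinality bound on C
    set S : Finset V := Finset.univ.filter fun u => T ≤ (congSet E f u).card with hSdef
    have hCS : Cset E T f = ↑S := by
      ext u; simp [Cset, hSdef]
    rw [hCS, Set.ncard_coe_finset]
    have key : S.card * T ≤ Fintype.card (V × V) * (h + 1) := by
      calc S.card * T = ∑ _u ∈ S, T := by rw [Finset.sum_const, smul_eq_mul]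
        _ ≤ ∑ u ∈ S, (congSet E f u).card :=
            Finset.sum_le_sum fun u hu => (Finset.mem_filter.mp hu).2
        _ ≤ ∑ u : V, (congSet E f u).card :=
            Finset.sum_le_sum_of_subset (Finset.subset_univ S)
        _ ≤ Fintype.card (V × V) * (h + 1) := sum_congSet_card_le E h T hh1 L
    have hcard : Fintype.card (V × V) = n * n := by
      rw [Fintype.card_prod, hn]
    have key2 : S.card * τ * (n * h) ≤ 2 * n * (n * h) := by
      have e1 : S.card * τ * (n * h) = S.card * T := by rw [hTdef]; ring
      have e2 : n * n * (h + 1) ≤ 2 * n * (n * h) := by nlinarith [hh1, hn1]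
      rw [hcard] at key
      rw [e1]
      exact le_trans key e2
    have key3 : S.card * τ ≤ 2 * n :=
      Nat.le_of_mul_le_mul_right key2 (by positivity)
    have hτpos : (0 : ℝ) < (τ : ℝ) := by exact_mod_cast hτ1
    rw [le_div_iff₀ hτpos]
    exact_mod_cast key3
  · intro s t p hp
    exact ⟨(build_spec E h T L (s, t) p hp).1, (build_spec E h T L (s, t) p hp).2.1⟩
  · intro s t hne
    have hqmem : ((s, t) : V × V) ∈ L := by
      rw [hLdef]; exact Finset.mem_toList.mpr (Finset.mem_univ _)
    obtain ⟨L₁, L₂, hsplit⟩ := List.append_of_mem hqmem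
    have hnd' := hsplit ▸ hnd
    have hq1 : ((s, t) : V × V) ∉ L₁ := by
      rcases List.nodup_append'.mp hnd' with ⟨_, _, hdisj⟩
      exact fun hmem => hdisj hmem List.mem_cons_self
    have hstep : f (s, t) = build E h T ((s, t) :: L₂) (s, t) := by
      rw [hfdef, hsplit]
      exact build_drop E h T L₁ _ _ hq1
    have hsuf : L₂ <:+ L := by
      rw [hsplit]
      exact (List.suffix_cons (s, t) L₂).trans (List.suffix_append L₁ _)
    have hCs : Cset E T (build E h T L₂) ⊆ Cset E T f :=
      hfdef ▸ Cset_suffix E h T hsuf hnd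
    have hmono : bdist (delV E (Cset E T (build E h T L₂))) h s t ≤
        bdist (delV E (Cset E T f)) h s t :=
      bdist_anti (fun u v hv => ⟨hv.1, fun hu => hv.2.1 (hCs hu), fun hu => hv.2.2 (hCs hu)⟩) h s t
    have hnes : bdist (delV E (Cset E T (build E h T L₂))) h s t ≠ ⊤ :=
      fun htop => hne (top_le_iff.mp (htop ▸ hmono))
    have hsome : ∃ p, build E h T ((s, t) :: L₂) (s, t) = some p := by
      rw [build_cons, if_pos rfl, dif_pos hnes]
      exact ⟨_, rfl⟩
    obtain ⟨p, hp⟩ := hsome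
    obtain ⟨_, _, _, hlen, _⟩ := build_head_spec E h T (s, t) L₂ p hp
    refine ⟨p, ?_, le_trans hlen hmono⟩
    show f (s, t) = some p
    rw [hstep]
    exact hp
  · intro u
    have hset : {q : V × V | ∃ p, f (q.1, q.2) = some p ∧ ∃ i ≤ p.len, p.vtx i = u} =
        ↑(congSet E f u) := by
      ext q
      simp [congSet]
    rw [hset, Set.ncard_coe_finset]
    calc (congSet E f u).card ≤ T + 1 := congSet_card_le E h T hT1 L u
      _ ≤ T + T := by omega
      _ = 2 * n * h * τ := by rw [hTdef]; ring


end Paper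
end

section
/- Let G = (V,E) be a directed graph on vertex set V, let h ≥ 2 be an integer, let C, D, H ⊆ V, let s ∈ V, and let Y ⊆ V × V be a set of pairs with ((C ∪ D ∪ {s}) × V) ∪ (V × (C ∪ D)) ⊆ Y. Let Π be a family containing, for some pairs (u,v), a path π_{u,v} from u to v in G avoiding all vertices of D, such that for all u,v ∈ V with δ_{G−(C∪D)}^h(u,v) < ∞, either (u,v) ∈ Y or π_{u,v} is defined with |π_{u,v}| ≤ δ_{G−(C∪D)}^h(u,v); moreover, for every defined π_{u,v} with |π_{u,v}| ≥ ⌊h/2⌋, a vertex β(u,v) ∈ H lying on π_{u,v} is fixed. Define the weighted directed graph X on vertex set V with the following edges (parallel edges merged keeping the minimum weight): for every (u,v) ∈ Y with δ_G^h(u,v) < ∞, an edge (u,v) of weight δ_G^h(u,v); for every z ∈ H and v ∈ V, an edge (z,v) of weight min{ length of the subpath of π_{u,v} from z to v : u ∈ V, π_{u,v} defined, |π_{u,v}| ≥ ⌊h/2⌋, β(u,v) = z }, present whenever this set is nonempty; and for every u ∈ V and z ∈ H, an edge (u,z) of weight min{ length of the subpath of π_{u,v} from u to z : v ∈ V, π_{u,v}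 defined, |π_{u,v}| ≥ ⌊h/2⌋, β(u,v) = z }, present whenever this set is nonempty. Then for every t ∈ V, the shortest-path distance from s to t in the weighted graph X equals δ_G(s,t). -/
open scoped Classical

namespace Paper

variable {V : Type*}

/-- The distance `δ_G(s,t)`: the minimum number of edges of a walk from `s` to `t`
(`⊤` if none exists). -/
noncomputable def gdist (E : V → V → Prop) (s t : V) : ℕ∞ :=
  ⨅ (k : ℕ) (_ : ∃ p : ℕ → V, p 0 = s ∧ p k = t ∧ IsWalk E k p), (k : ℕ∞)

/-- The shortest-path distance in a weighted digraph given by a weight function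
`w : V → V → ℕ∞` (`⊤` meaning absence of an edge): the minimum total weight of a walk. -/
noncomputable def wdist (w : V → V → ℕ∞) (s t : V) : ℕ∞ :=
  ⨅ (k : ℕ) (p : ℕ → V) (_ : p 0 = s ∧ p k = t), ∑ i ∈ Finset.range k, w (p i) (p (i + 1))

section Aux

variable {E : V → V → Prop} {w : V → V → ℕ∞}

lemma gdist_le_of_walk {a b : V} {k : ℕ} {p : ℕ → V}
    (h0 : p 0 = a) (hk : p k = b) (hwk : IsWalk E k p) : gdist E a b ≤ (k : ℕ∞) :=
  iInf_le_of_le k (iInf_le_of_le ⟨p, h0, hk, hwk⟩ le_rfl)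

lemma bdist_le_of_walk {h : ℕ} {a b : V} {k : ℕ} {p : ℕ → V}
    (hkh : k ≤ h) (h0 : p 0 = a) (hk : p k = b) (hwk : IsWalk E k p) :
    bdist E h a b ≤ (k : ℕ∞) :=
  iInf_le_of_le k (iInf_le_of_le ⟨hkh, p, h0, hk, hwk⟩ le_rfl)

lemma gdist_le_bdist {h : ℕ} {a b : V} : gdist E a b ≤ bdist E h a b := by
  refine le_iInf fun k => le_iInf fun hk => ?_
  obtain ⟨p, h0, h1, h2⟩ := hk.2
  exact gdist_le_of_walk h0 h1 h2

lemma wdist_le_of_walk {a b : V} {k : ℕ} {p : ℕ → V}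
    (h0 : p 0 = a) (hk : p k = b) :
    wdist w a b ≤ ∑ i ∈ Finset.range k, w (p i) (p (i + 1)) :=
  iInf_le_of_le k (iInf_le_of_le p (iInf_le_of_le ⟨h0, hk⟩ le_rfl))

lemma exists_walk_of_gdist_lt {a b : V} {c : ℕ∞} (h : gdist E a b < c) :
    ∃ k : ℕ, (k : ℕ∞) < c ∧ ∃ p : ℕ → V, p 0 = a ∧ p k = b ∧ IsWalk E k p := by
  rw [gdist, iInf_lt_iff] at h
  obtain ⟨k, hk⟩ := h
  rw [iInf_lt_iff] at hk
  obtain ⟨hex, hlt⟩ := hk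
  exact ⟨k, hlt, hex⟩

lemma exists_walk_of_wdist_lt {a b : V} {c : ℕ∞} (h : wdist w a b < c) :
    ∃ k : ℕ, ∃ p : ℕ → V, p 0 = a ∧ p k = b ∧
      ∑ i ∈ Finset.range k, w (p i) (p (i + 1)) < c := by
  rw [wdist, iInf_lt_iff] at h
  obtain ⟨k, hk⟩ := h
  rw [iInf_lt_iff] at hk
  obtain ⟨p, hp⟩ := hk
  rw [iInf_lt_iff] at hp
  obtain ⟨⟨h0, hk'⟩, hlt⟩ := hp
  exact ⟨k, p, h0, hk', hlt⟩

lemma gdist_triangle (E : V → V → Prop) (a b c : V) :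
    gdist E a c ≤ gdist E a b + gdist E b c := by
  rcases eq_or_ne (gdist E a b) ⊤ with h1 | h1
  · simp [h1]
  rcases eq_or_ne (gdist E b c) ⊤ with h2 | h2
  · simp [h2]
  lift gdist E a b to ℕ using h1 with m1 hm1
  lift gdist E b c to ℕ using h2 with m2 hm2
  have hl1 : gdist E a b < ((m1 + 1 : ℕ) : ℕ∞) := by
    rw [← hm1]; exact Nat.cast_lt.2 (by omega)
  have hl2 : gdist E b c < ((m2 + 1 : ℕ) : ℕ∞) := by
    rw [← hm2]; exact Nat.cast_lt.2 (by omega)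
  obtain ⟨k1, hk1, p, hp0, hpk, hpw⟩ := exists_walk_of_gdist_lt hl1
  obtain ⟨k2, hk2, q, hq0, hqk, hqw⟩ := exists_walk_of_gdist_lt hl2
  have hk1' : k1 ≤ m1 := by exact_mod_cast Nat.lt_succ_iff.1 (by exact_mod_cast hk1)
  have hk2' : k2 ≤ m2 := by exact_mod_cast Nat.lt_succ_iff.1 (by exact_mod_cast hk2)
  set r : ℕ → V := fun i => if i ≤ k1 then p i else q (i - k1) with hr
  have hr0 : r 0 = a := by simp [hr, hp0]
  have hrk : r (k1 + k2) = c := by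
    simp only [hr]
    split_ifs with hle
    · have hk20 : k2 = 0 := by omega
      subst hk20
      rw [Nat.add_zero, hpk, ← hq0]
      exact hqk
    · rw [show k1 + k2 - k1 = k2 by omega, hqk]
  have hrw : IsWalk E (k1 + k2) r := by
    intro i hi
    simp only [hr]
    by_cases h1' : i + 1 ≤ k1
    · rw [if_pos (by omega : i ≤ k1), if_pos h1']
      exact hpw i (by omega)
    · rw [if_neg h1']
      by_cases h2' : i ≤ k1
      · have : i = k1 := by omega
        subst this
        rw [if_pos le_rfl, hpk, ← hq0, show i + 1 - i = 0 + 1 by omega]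
        exact hqw 0 (by omega)
      · rw [if_neg h2', show i + 1 - k1 = (i - k1) + 1 by omega]
        exact hqw (i - k1) (by omega)
  calc gdist E a c ≤ ((k1 + k2 : ℕ) : ℕ∞) := gdist_le_of_walk hr0 hrk hrw
    _ ≤ (m1 : ℕ∞) + (m2 : ℕ∞) := by
        push_cast
        exact add_le_add (by exact_mod_cast hk1') (by exact_mod_cast hk2')

lemma wdist_le_single (a b : V) : wdist w a b ≤ w a b := by
  have := wdist_le_of_walk (w := w) (a := a) (b := b) (k := 1)
    (p := fun i => if i = 0 then a else b) (by simp) (by simp)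
  simpa using this

lemma wdist_self_le (a : V) : wdist w a a ≤ 0 := by
  have := wdist_le_of_walk (w := w) (a := a) (b := a) (k := 0) (p := fun _ => a) rfl rfl
  simpa using this

lemma wdist_le_edge_add (w : V → V → ℕ∞) (a b t : V) :
    wdist w a t ≤ w a b + wdist w b t := by
  rcases eq_or_ne (wdist w b t) ⊤ with h1 | h1
  · simp [h1]
  have hlt : wdist w b t < wdist w b t + 1 := (ENat.lt_add_one_iff h1).2 le_rfl
  obtain ⟨k, p, hp0, hpk, hsum⟩ := exists_walk_of_wdist_lt hlt
  have hsum' : ∑ i ∈ Finset.range k, w (p i) (p (i + 1)) ≤ wdist w b t :=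
    (ENat.lt_add_one_iff h1).1 hsum
  set p' : ℕ → V := fun i => if i = 0 then a else p (i - 1) with hp'
  have h0' : p' 0 = a := by simp [hp']
  have hk' : p' (k + 1) = t := by simp [hp', hpk]
  have hstep : wdist w a t ≤ ∑ i ∈ Finset.range (k + 1), w (p' i) (p' (i + 1)) :=
    wdist_le_of_walk h0' hk'
  refine hstep.trans ?_
  rw [Finset.sum_range_succ']
  have he : ∀ i : ℕ, p' (i + 1) = p i := fun i => by simp [hp']
  have hterm : ∀ i : ℕ, w (p' (i + 1)) (p' (i + 1 + 1)) = w (p i) (p (i + 1)) := by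
    intro i; rw [he, he]
  rw [Finset.sum_congr rfl fun i _ => hterm i]
  have h01 : w (p' 0) (p' (0 + 1)) = w a b := by rw [h0', he, hp0]
  rw [h01, add_comm]
  exact add_le_add le_rfl hsum'

end Aux

/-- **Lemma 5.4 (correctness of the single-source query procedure), self-contained form.**
Under the stated invariants on `Y`, `Π` (paths `π_{u,v}` avoiding `D`) and the hitting-set
representatives `β`, the auxiliary weighted graph `X` (with the three kinds of edges, parallel
edges merged by minimum weight) satisfies `δ_X(s,t) = δ_G(s,t)` for every `t`. -/
theorem query_graph_correct {V : Type*} (E : V → V → Prop) (h : ℕ) (hh : 2 ≤ h)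
    (C D H : Set V) (s : V) (Y : Set (V × V))
    (hY : ∀ u v : V, ((u ∈ C ∨ u ∈ D ∨ u = s) ∨ (v ∈ C ∨ v ∈ D)) → (u, v) ∈ Y)
    (π : V → V → Option (Path E)) (β : V → V → V)
    (hπ : ∀ u v : V, ∀ p, π u v = some p →
      p.vtx 0 = u ∧ p.vtx p.len = v ∧ ∀ i ≤ p.len, p.vtx i ∉ D)
    (hcov : ∀ u v : V, bdist (delV E (C ∪ D)) h u v ≠ ⊤ →
      (u, v) ∈ Y ∨ ∃ p, π u v = some p ∧ (p.len : ℕ∞) ≤ bdist (delV E (C ∪ D)) h u v)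
    (hβ : ∀ u v : V, ∀ p, π u v = some p → h / 2 ≤ p.len →
      β u v ∈ H ∧ ∃ i ≤ p.len, p.vtx i = β u v)
    (w : V → V → ℕ∞)
    (hw : ∀ a b : V, w a b =
      (if (a, b) ∈ Y then bdist E h a b else ⊤) ⊓
      (if a ∈ H then
        ⨅ (u : V) (p : Path E) (_ : π u b = some p ∧ h / 2 ≤ p.len ∧ β u b = a)
          (i : ℕ) (_ : i ≤ p.len ∧ p.vtx i = a), ((p.len - i : ℕ) : ℕ∞)
       else ⊤) ⊓
      (if b ∈ H then
        ⨅ (v : V) (p : Path E) (_ : π a v = some p ∧ h / 2 ≤ p.len ∧ β a v = b)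
          (i : ℕ) (_ : i ≤ p.len ∧ p.vtx i = b), ((i : ℕ) : ℕ∞)
       else ⊤)) :
    ∀ t : V, wdist w s t = gdist E s t := by
  -- Edgewise lower bound: every edge of `X` is witnessed by an actual walk in `G`.
  have hedge : ∀ a b : V, gdist E a b ≤ w a b := by
    intro a b
    rw [hw a b]
    refine le_inf (le_inf ?_ ?_) ?_
    · split_ifs with hy
      · exact gdist_le_bdist
      · exact le_top
    · split_ifs with hH
      · refine le_iInf fun u => le_iInf fun q => le_iInf fun hcond => le_iInf fun i =>
          le_iInf fun hi => ?_
        obtain ⟨hqsome, h2q, hbq⟩ := hcond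
        obtain ⟨hiq, hvi⟩ := hi
        obtain ⟨hq0, hqlast, -⟩ := hπ u b q hqsome
        refine gdist_le_of_walk (p := fun r => q.vtx (i + r)) (by simpa using hvi) ?_ ?_
        · show q.vtx (i + (q.len - i)) = b
          rw [show i + (q.len - i) = q.len by omega, hqlast]
        · intro r hr
          show E (q.vtx (i + r)) (q.vtx (i + (r + 1)))
          rw [show i + (r + 1) = (i + r) + 1 by omega]
          exact q.isWalk (i + r) (by omega)
      · exact le_top
    · split_ifs with hH
      · refine le_iInf fun v => le_iInf fun q => le_iInf fun hcond => le_iInf fun i =>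
          le_iInf fun hi => ?_
        obtain ⟨hqsome, h2q, hbq⟩ := hcond
        obtain ⟨hiq, hvi⟩ := hi
        obtain ⟨hq0, hqlast, -⟩ := hπ a v q hqsome
        exact gdist_le_of_walk hq0 hvi (fun r hr => q.isWalk r (by omega))
      · exact le_top
  -- Easy direction: `δ_G(a,t) ≤ δ_X(a,t)`.
  have heasy : ∀ a t : V, gdist E a t ≤ wdist w a t := by
    intro a t
    refine le_iInf fun k => le_iInf fun p => le_iInf fun hc => ?_
    obtain ⟨h0, hk⟩ := hc
    subst h0; subst hk
    induction k with
    | zero =>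
      have := gdist_le_of_walk (E := E) (k := 0) (p := p) rfl rfl
        (fun i hi => absurd hi (Nat.not_lt_zero i))
      simpa using this
    | succ k ih =>
      rw [Finset.sum_range_succ]
      exact (gdist_triangle E (p 0) (p k) (p (k + 1))).trans (add_le_add ih (hedge _ _))
  -- Main induction: `δ_X(a,t) ≤ n` whenever `δ_G(a,t) = n` and `a` is suitable.
  have key : ∀ n : ℕ, ∀ a t : V, gdist E a t = (n : ℕ∞) →
      (a ∈ C ∨ a ∈ D ∨ a = s ∨ h / 2 ≤ n) → wdist w a t ≤ (n : ℕ∞) := by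
    intro n
    induction n using Nat.strong_induction_on with
    | _ n IH =>
    intro a t hgd hgood
    -- extract a geodesic walk of length n
    have hlt : gdist E a t < ((n + 1 : ℕ) : ℕ∞) := by
      rw [hgd]; exact Nat.cast_lt.2 (by omega)
    obtain ⟨k, hklt, p, hp0, hpk, hpw⟩ := exists_walk_of_gdist_lt hlt
    have hkn : k = n := by
      have h1 : (n : ℕ∞) ≤ (k : ℕ∞) := hgd ▸ gdist_le_of_walk hp0 hpk hpw
      have h2 : k < n + 1 := Nat.cast_lt.1 hklt
      have h3 : n ≤ k := Nat.cast_le.1 h1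
      omega
    subst hkn
    -- prefix/suffix distances along the geodesic are exact
    have hpref : ∀ i, i ≤ k → gdist E a (p i) ≤ (i : ℕ∞) := by
      intro i hi
      exact gdist_le_of_walk hp0 rfl (fun r hr => hpw r (by omega))
    have hsuf : ∀ i, i ≤ k → gdist E (p i) t ≤ ((k - i : ℕ) : ℕ∞) := by
      intro i hi
      refine gdist_le_of_walk (p := fun r => p (i + r)) rfl ?_ ?_
      · show p (i + (k - i)) = t
        rw [show i + (k - i) = k by omega, hpk]
      · intro r hr
        show E (p (i + r)) (p (i + (r + 1)))
        rw [show i + (r + 1) = (i + r) + 1 by omega]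
        exact hpw (i + r) (by omega)
    have hsufe : ∀ i, i ≤ k → gdist E (p i) t = ((k - i : ℕ) : ℕ∞) := by
      intro i hi
      refine le_antisymm (hsuf i hi) ?_
      by_contra hc
      push_neg at hc
      have hne : gdist E (p i) t ≠ ⊤ := ne_top_of_lt hc
      lift gdist E (p i) t to ℕ using hne with m hm
      have hmlt : m < k - i := by exact_mod_cast hc
      have h4 : (k : ℕ∞) ≤ (i : ℕ∞) + (m : ℕ∞) := by
        calc (k : ℕ∞) = gdist E a t := hgd.symm
          _ ≤ gdist E a (p i) + gdist E (p i) t := gdist_triangle E a (p i) t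
          _ ≤ (i : ℕ∞) + (m : ℕ∞) := add_le_add (hpref i hi) (le_of_eq hm.symm)
      have h5 : k ≤ i + m := by exact_mod_cast h4
      omega
    have hprefe : ∀ i, i ≤ k → (i : ℕ∞) ≤ gdist E a (p i) := by
      intro i hi
      by_contra hc
      push_neg at hc
      have hne : gdist E a (p i) ≠ ⊤ := ne_top_of_lt hc
      lift gdist E a (p i) to ℕ using hne with m hm
      have hmlt : m < i := by exact_mod_cast hc
      have h4 : (k : ℕ∞) ≤ (m : ℕ∞) + ((k - i : ℕ) : ℕ∞) := by
        calc (k : ℕ∞) = gdist E a t := hgd.symm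
          _ ≤ gdist E a (p i) + gdist E (p i) t := gdist_triangle E a (p i) t
          _ ≤ (m : ℕ∞) + ((k - i : ℕ) : ℕ∞) := add_le_add (le_of_eq hm.symm) (hsuf i hi)
      have h5 : k ≤ m + (k - i) := by exact_mod_cast h4
      omega
    -- trivial case: distance 0
    rcases Nat.eq_zero_or_pos k with hk0 | hkpos
    · subst hk0
      have hat : a = t := by rw [← hp0, hpk]
      subst hat
      have := wdist_self_le (w := w) a
      simpa using this
    -- the jump length jj
    set jj := if k ≤ h then k else min h (k - h / 2) with hjj
    have hjj1 : 1 ≤ jj := by rw [hjj]; split_ifs <;> omega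
    have hjjk : jj ≤ k := by rw [hjj]; split_ifs <;> omega
    have hjjh : jj ≤ h := by rw [hjj]; split_ifs <;> omega
    have hrem : k - jj = 0 ∨ h / 2 ≤ k - jj := by rw [hjj]; split_ifs <;> omega
    have hgoodj : (a ∈ C ∨ a ∈ D ∨ a = s) ∨ h / 2 ≤ jj := by
      rcases hgood with hc | hc | hc | hc
      · exact Or.inl (Or.inl hc)
      · exact Or.inl (Or.inr (Or.inl hc))
      · exact Or.inl (Or.inr (Or.inr hc))
      · right; rw [hjj]; split_ifs <;> omega
    by_cases hA : ∃ j', 1 ≤ j' ∧ j' ≤ jj ∧ (p j' ∈ C ∨ p j' ∈ D)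
    · -- Case A: the geodesic meets C ∪ D within the jump: use a Y-edge into C ∪ D
      obtain ⟨j', hj'1, hj'jj, hj'CD⟩ := hA
      have hwY : w a (p j') ≤ (j' : ℕ∞) := by
        calc w a (p j') ≤ (if (a, p j') ∈ Y then bdist E h a (p j') else ⊤) := by
              rw [hw a (p j')]; exact inf_le_left.trans inf_le_left
          _ = bdist E h a (p j') := if_pos (hY a (p j') (Or.inr hj'CD))
          _ ≤ (j' : ℕ∞) := bdist_le_of_walk (by omega) hp0 rfl (fun r hr => hpw r (by omega))
      have hIH : wdist w (p j') t ≤ ((k - j' : ℕ) : ℕ∞) :=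
        IH (k - j') (by omega) (p j') t (hsufe j' (by omega))
          (by rcases hj'CD with hc | hc
              · exact Or.inl hc
              · exact Or.inr (Or.inl hc))
      calc wdist w a t ≤ w a (p j') + wdist w (p j') t := wdist_le_edge_add w a (p j') t
        _ ≤ (j' : ℕ∞) + ((k - j' : ℕ) : ℕ∞) := add_le_add hwY hIH
        _ = (k : ℕ∞) := by rw [← Nat.cast_add]; congr 1; omega
    · -- Case B: the geodesic avoids C ∪ D on the jump
      push_neg at hA
      have hYπ : (a, p jj) ∈ Y ∨
          (h / 2 ≤ jj ∧ ∃ q : Path E, π a (p jj) = some q ∧ (q.len : ℕ∞) ≤ (jj : ℕ∞)) := by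
        by_cases hspec : a ∈ C ∨ a ∈ D ∨ a = s
        · exact Or.inl (hY a (p jj) (Or.inl hspec))
        · have h2jj : h / 2 ≤ jj := by
            rcases hgoodj with hg | hg
            · exact absurd hg hspec
            · exact hg
          have hmemCD : ∀ i, i ≤ jj → p i ∉ C ∪ D := by
            intro i hi hmem
            rw [Set.mem_union] at hmem
            rcases Nat.eq_zero_or_pos i with h0 | h0
            · subst h0
              rw [hp0] at hmem
              rcases hmem with hm | hm
              · exact hspec (Or.inl hm)
              · exact hspec (Or.inr (Or.inl hm))
            · rcases hmem with hm | hm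
              · exact (hA i h0 hi).1 hm
              · exact (hA i h0 hi).2 hm
          have hbd : bdist (delV E (C ∪ D)) h a (p jj) ≤ (jj : ℕ∞) := by
            refine bdist_le_of_walk hjjh hp0 rfl ?_
            intro i hi
            exact ⟨hpw i (by omega), hmemCD i (by omega), hmemCD (i + 1) (by omega)⟩
          have hne : bdist (delV E (C ∪ D)) h a (p jj) ≠ ⊤ :=
            ne_top_of_le_ne_top (by simp) hbd
          rcases hcov a (p jj) hne with hY' | ⟨q, hq, hql⟩
          · exact Or.inl hY'
          · exact Or.inr ⟨h2jj, q, hq, hql.trans hbd⟩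
      rcases hYπ with hY' | ⟨h2jj, q, hq, hql⟩
      · -- a Y-edge realizes the jump
        have hwY : w a (p jj) ≤ (jj : ℕ∞) := by
          calc w a (p jj) ≤ (if (a, p jj) ∈ Y then bdist E h a (p jj) else ⊤) := by
                rw [hw a (p jj)]; exact inf_le_left.trans inf_le_left
            _ = bdist E h a (p jj) := if_pos hY'
            _ ≤ (jj : ℕ∞) := bdist_le_of_walk hjjh hp0 rfl (fun r hr => hpw r (by omega))
        by_cases hjk : jj = k
        · have hpt : p jj = t := by rw [hjk, hpk]
          calc wdist w a t ≤ w a t := wdist_le_single a t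
            _ = w a (p jj) := by rw [hpt]
            _ ≤ (jj : ℕ∞) := hwY
            _ = (k : ℕ∞) := by rw [hjk]
        · have hIH : wdist w (p jj) t ≤ ((k - jj : ℕ) : ℕ∞) :=
            IH (k - jj) (by omega) (p jj) t (hsufe jj hjjk)
              (Or.inr (Or.inr (Or.inr (by rcases hrem with h0 | h2r <;> omega))))
          calc wdist w a t ≤ w a (p jj) + wdist w (p jj) t := wdist_le_edge_add w a (p jj) t
            _ ≤ (jj : ℕ∞) + ((k - jj : ℕ) : ℕ∞) := add_le_add hwY hIH
            _ = (k : ℕ∞) := by rw [← Nat.cast_add]; congr 1; omega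
      · -- a long path of Π realizes the jump, via its hitting-set representative
        obtain ⟨hq0, hqlast, -⟩ := hπ a (p jj) q hq
        have hlenle : q.len ≤ jj := by exact_mod_cast hql
        have hlenge : (jj : ℕ∞) ≤ (q.len : ℕ∞) :=
          (hprefe jj hjjk).trans (gdist_le_of_walk hq0 hqlast q.isWalk)
        have hlen : q.len = jj := by
          have := Nat.cast_le.1 hlenge; omega
        have h2q : h / 2 ≤ q.len := by omega
        obtain ⟨hzH, i, hiq, hvi⟩ := hβ a (p jj) q hq h2q
        set z := β a (p jj) with hz
        have hw1 : w a z ≤ (i : ℕ∞) := by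
          rw [hw a z]
          refine inf_le_right.trans ?_
          rw [if_pos hzH]
          exact iInf_le_of_le (p jj) (iInf_le_of_le q (iInf_le_of_le ⟨hq, h2q, hz.symm⟩
            (iInf_le_of_le i (iInf_le_of_le ⟨hiq, hvi⟩ le_rfl))))
        have hw2 : w z (p jj) ≤ ((q.len - i : ℕ) : ℕ∞) := by
          rw [hw z (p jj)]
          refine (inf_le_left.trans inf_le_right).trans ?_
          rw [if_pos hzH]
          exact iInf_le_of_le a (iInf_le_of_le q (iInf_le_of_le ⟨hq, h2q, hz.symm⟩
            (iInf_le_of_le i (iInf_le_of_le ⟨hiq, hvi⟩ le_rfl))))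
        by_cases hjk : jj = k
        · have hpt : p jj = t := by rw [hjk, hpk]
          calc wdist w a t ≤ w a z + wdist w z t := wdist_le_edge_add w a z t
            _ ≤ w a z + w z t := add_le_add le_rfl (wdist_le_single z t)
            _ = w a z + w z (p jj) := by rw [hpt]
            _ ≤ (i : ℕ∞) + ((q.len - i : ℕ) : ℕ∞) := add_le_add hw1 hw2
            _ = (k : ℕ∞) := by rw [← Nat.cast_add]; congr 1; omega
        · have hIH : wdist w (p jj) t ≤ ((k - jj : ℕ) : ℕ∞) :=
            IH (k - jj) (by omega) (p jj) t (hsufe jj hjjk)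
              (Or.inr (Or.inr (Or.inr (by rcases hrem with h0 | h2r <;> omega))))
          calc wdist w a t ≤ w a z + wdist w z t := wdist_le_edge_add w a z t
            _ ≤ w a z + (w z (p jj) + wdist w (p jj) t) :=
                add_le_add le_rfl (wdist_le_edge_add w z (p jj) t)
            _ ≤ (i : ℕ∞) + (((q.len - i : ℕ) : ℕ∞) + ((k - jj : ℕ) : ℕ∞)) :=
                add_le_add hw1 (add_le_add hw2 hIH)
            _ = (k : ℕ∞) := by rw [← Nat.cast_add, ← Nat.cast_add]; congr 1; omega
  -- conclusion
  intro t
  by_cases htop : gdist E s t = ⊤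
  · rw [htop]
    exact eq_top_iff.2 (htop ▸ heasy s t)
  · lift gdist E s t to ℕ using htop with n hn
    exact le_antisymm (key n s t hn.symm (Or.inr (Or.inr (Or.inl rfl)))) (hn.le.trans (heasy s t))


end Paper
end

section
/- Let G = (V,E) be a directed graph, let C, D, H ⊆ V, and let h ≥ 1 be an integer. Let Π' = (π'_{s,t}) be a family containing, for some pairs (s,t), a path π'_{s,t} from s to t in G with at most h edges (with |π'_{s,t}| := ∞ when undefined), such that: (i) for all s,t ∈ V for which every walk from s to t in G of length δ_G^h(s,t) avoids all vertices of C ∪ D (in particular whenever δ_G^h(s,t) = ∞), |π'_{s,t}| = δ_G^h(s,t); and (ii) every defined π'_{s,t} with |π'_{s,t}| = h contains a vertex of H. Then for all s ∈ V ∖ (C ∪ D ∪ H) and t ∈ V with δ_G(s,t) < ∞, there is a walk from s to t in G of length exactly δ_G(s,t) that either (a) equals π'_{s,t}, or (b) has a prefix of positive length which is either π'_{s,r} for some r ∈ C ∪ D ∪ H, or π'_{s,q} followed by an edge (q,r) ∈ E for some q ∈ V and r ∈ C ∪ D ∪ H. -/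
open scoped Classical

namespace Paper

variable {V : Type*}

/-- The length of an optional path, `⊤` if undefined. -/
def plen {E : V → V → Prop} : Option (Path E) → ℕ∞
  | none => ⊤
  | some p => (p.len : ℕ∞)

lemma isWalk_mono {E : V → V → Prop} {k m : ℕ} {p : ℕ → V} (hw : IsWalk E k p) (hm : m ≤ k) :
    IsWalk E m p := fun i hi => hw i (lt_of_lt_of_le hi hm)

lemma gdist_le {E : V → V → Prop} {s t : V} {k : ℕ} {p : ℕ → V}
    (h0 : p 0 = s) (hk : p k = t) (hw : IsWalk E k p) : gdist E s t ≤ (k : ℕ∞) :=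
  iInf₂_le k ⟨p, h0, hk, hw⟩

lemma exists_walk_of_gdist_ne_top {E : V → V → Prop} {s t : V} (hne : gdist E s t ≠ ⊤) :
    ∃ (k : ℕ) (p : ℕ → V), p 0 = s ∧ p k = t ∧ IsWalk E k p ∧ (k : ℕ∞) = gdist E s t := by
  have hS : ∃ k : ℕ, ∃ p : ℕ → V, p 0 = s ∧ p k = t ∧ IsWalk E k p := by
    by_contra hc
    push_neg at hc
    apply hne
    rw [gdist]
    rw [iInf_eq_top]
    intro k
    rw [iInf_eq_top]
    intro hk
    exact absurd hk (by push_neg; exact hc k)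
  classical
  obtain ⟨p, h0, hk, hw⟩ := Nat.find_spec hS
  refine ⟨Nat.find hS, p, h0, hk, hw, le_antisymm ?_ (gdist_le h0 hk hw)⟩
  refine le_iInf₂ fun k hk' => ?_
  exact_mod_cast Nat.find_min' hS hk'

/-- Splice walk `Q` (length `a`, ending at `W i`) with walk `W` from position `i` on. -/
def spl (Q W : ℕ → V) (a i : ℕ) : ℕ → V := fun j => if j < a then Q j else W (j - a + i)

lemma spl_left {Q W : ℕ → V} {a i : ℕ} (hQa : Q a = W i) : ∀ j ≤ a, spl Q W a i j = Q j := by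
  intro j hj
  rcases lt_or_eq_of_le hj with hj | hj
  · simp [spl, hj]
  · subst hj
    simp [spl, hQa]

lemma spl_right {Q W : ℕ → V} {a i : ℕ} : ∀ j, a ≤ j → spl Q W a i j = W (j - a + i) := by
  intro j hj
  simp [spl, Nat.not_lt.mpr hj]

lemma spl_isWalk {E : V → V → Prop} {Q W : ℕ → V} {a i k : ℕ}
    (hQ : IsWalk E a Q) (hW : IsWalk E k W) (hik : i ≤ k) (hQa : Q a = W i) :
    IsWalk E (a + (k - i)) (spl Q W a i) := by
  intro j hj
  rcases lt_or_ge j a with hja | hja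
  · rw [spl_left hQa j (by omega), spl_left hQa (j + 1) (by omega)]
    exact hQ j hja
  · rw [spl_right j hja, spl_right (j + 1) (by omega)]
    have h1 : j - a + i < k := by omega
    have h2 : j + 1 - a + i = (j - a + i) + 1 := by omega
    rw [h2]
    exact hW _ h1

lemma spl_zero {Q W : ℕ → V} {a i : ℕ} (hQa : Q a = W i) : spl Q W a i 0 = Q 0 :=
  spl_left hQa 0 (Nat.zero_le a)

lemma spl_last {Q W : ℕ → V} {a i k : ℕ} (hik : i ≤ k) :
    spl Q W a i (a + (k - i)) = W k := by
  rw [spl_right _ (Nat.le_add_right a _)]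
  congr 1
  omega

lemma tight_prefix {E : V → V → Prop} {s t : V} {k : ℕ} {W : ℕ → V}
    (h0 : W 0 = s) (hk : W k = t) (hW : IsWalk E k W) (hg : (k : ℕ∞) = gdist E s t)
    {i : ℕ} (hi : i ≤ k) : (i : ℕ∞) = gdist E s (W i) := by
  refine le_antisymm ?_ (gdist_le h0 rfl (isWalk_mono hW hi))
  by_contra hc
  push_neg at hc
  have hne : gdist E s (W i) ≠ ⊤ := fun hT => by simp [hT] at hc
  obtain ⟨a, Q, hQ0, hQa, hQw, hQg⟩ := exists_walk_of_gdist_ne_top hne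
  have hai : a < i := by
    have := hQg.trans_lt hc
    exact_mod_cast this
  have hsw := spl_isWalk (i := i) hQw hW hi hQa
  have h0' : spl Q W a i 0 = s := by rw [spl_zero hQa, hQ0]
  have hk' : spl Q W a i (a + (k - i)) = t := by rw [spl_last hi, hk]
  have hle : gdist E s t ≤ ((a + (k - i) : ℕ) : ℕ∞) := gdist_le h0' hk' hsw
  rw [← hg] at hle
  have hlt : a + (k - i) < k := by omega
  exact absurd (lt_of_le_of_lt hle (by exact_mod_cast hlt)) (lt_irrefl _)

/-- **Lemma 6.2 (shortest-path prefix decomposition).** Assume `Π'` consists of paths of `G`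
with at most `h` edges such that (i) `|π'_{s,t}| = δ_G^h(s,t)` whenever every walk `s → t` in
`G` of length `δ_G^h(s,t)` avoids `C ∪ D`, and (ii) every defined `π'_{s,t}` with exactly `h`
edges contains a vertex of `H`.  Then for every `s ∉ C ∪ D ∪ H` and every `t` reachable from
`s`, some shortest walk `s → t` in `G` either (a) equals `π'_{s,t}` or (b) has a prefix of
positive length that is `π'_{s,r}` with `r ∈ C ∪ D ∪ H`, or `π'_{s,q}` followed by an edge
`(q,r)` with `r ∈ C ∪ D ∪ H`. -/
theorem prefix_decomposition {V : Type*} (E : V → V → Prop)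
    (C D H : Set V) (h : ℕ) (hh : 1 ≤ h)
    (π' : V → V → Option (Path E))
    (hπ' : ∀ s t : V, ∀ p, π' s t = some p →
      p.vtx 0 = s ∧ p.vtx p.len = t ∧ p.len ≤ h)
    (hi : ∀ s t : V,
      (∀ (k : ℕ) (wv : ℕ → V), wv 0 = s → wv k = t → IsWalk E k wv →
        (k : ℕ∞) = bdist E h s t → ∀ i ≤ k, wv i ∉ C ∧ wv i ∉ D) →
      plen (π' s t) = bdist E h s t)
    (hii : ∀ s t : V, ∀ p, π' s t = some p → p.len = h → ∃ i ≤ p.len, p.vtx i ∈ H) :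
    ∀ s t : V, s ∉ C → s ∉ D → s ∉ H → gdist E s t ≠ ⊤ →
      ∃ (k : ℕ) (wv : ℕ → V), wv 0 = s ∧ wv k = t ∧ IsWalk E k wv ∧
        (k : ℕ∞) = gdist E s t ∧
        ((∃ p, π' s t = some p ∧ p.len = k ∧ ∀ i ≤ k, wv i = p.vtx i) ∨
         (∃ m, 1 ≤ m ∧ m ≤ k ∧
           ((∃ r, (r ∈ C ∨ r ∈ D ∨ r ∈ H) ∧
              ∃ p, π' s r = some p ∧ p.len = m ∧ ∀ i ≤ m, wv i = p.vtx i) ∨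
            (∃ qv r, (r ∈ C ∨ r ∈ D ∨ r ∈ H) ∧ E qv r ∧
              ∃ p, π' s qv = some p ∧ p.len + 1 = m ∧
                (∀ i ≤ p.len, wv i = p.vtx i) ∧ wv m = r)))) := by
  intro s t hsC hsD hsH hne
  obtain ⟨k₀, w₀, hw0, hwk, hww, hwg⟩ := exists_walk_of_gdist_ne_top hne
  -- Helper: from the avoidance hypothesis, `π' s q` is a path of the optimal length.
  have getPath : ∀ (q : V) (m : ℕ), m ≤ h → (m : ℕ∞) = gdist E s q →
      (∀ (wv : ℕ → V), wv 0 = s → wv m = q → IsWalk E m wv →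
        ∀ i ≤ m, wv i ∉ C ∧ wv i ∉ D) →
      ∃ p : Path E, π' s q = some p ∧ p.len = m := by
    intro q m hmh hmg havoid
    have hwex : ∃ p : ℕ → V, p 0 = s ∧ p m = q ∧ IsWalk E m p := by
      have hne' : gdist E s q ≠ ⊤ := by rw [← hmg]; simp
      obtain ⟨a, Q, h1, h2, h3, h4⟩ := exists_walk_of_gdist_ne_top hne'
      have ham : a = m := by rw [← hmg] at h4; exact_mod_cast h4
      subst ham; exact ⟨Q, h1, h2, h3⟩
    have hb : bdist E h s q = (m : ℕ∞) := by
      refine le_antisymm (iInf₂_le m ⟨hmh, hwex⟩) (le_iInf₂ fun k hk => ?_)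
      obtain ⟨-, p, h1, h2, h3⟩ := hk
      have := gdist_le h1 h2 h3
      rw [← hmg] at this
      exact this
    have hplen := hi s q (fun k wv h1 h2 h3 h4 => by
      have hkm : k = m := by rw [hb] at h4; exact_mod_cast h4
      subst hkm; exact havoid wv h1 h2 h3)
    rw [hb] at hplen
    cases hπ : π' s q with
    | none => rw [hπ] at hplen; simp [plen] at hplen
    | some p =>
      rw [hπ] at hplen
      simp only [plen] at hplen
      exact ⟨p, rfl, by exact_mod_cast hplen⟩
  -- The "hit" predicate: some shortest walk meets `C ∪ D` at position `j ≥ 1`.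
  set Hit : ℕ → Prop := fun j => 1 ≤ j ∧ j ≤ k₀ ∧ ∃ w : ℕ → V,
      w 0 = s ∧ w k₀ = t ∧ IsWalk E k₀ w ∧ (w j ∈ C ∨ w j ∈ D) with hHitdef
  by_cases hcase : ∃ j, j ≤ h ∧ Hit j
  · -- Case I: there is a hit within the first `h` steps; take the least one.
    obtain ⟨j₁, hj₁h, hj₁⟩ := hcase
    have hex : ∃ j, Hit j := ⟨j₁, hj₁⟩
    have hj₀ : Hit (Nat.find hex) := Nat.find_spec hex
    set j₀ := Nat.find hex with hj₀def
    have hj₀h : j₀ ≤ h := le_trans (Nat.find_min' hex hj₁) hj₁h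
    obtain ⟨hj₀1, hj₀k, w', h'0, h'k, h'w, h'CD⟩ := hj₀
    set a := j₀ - 1 with hadef
    set q := w' a with hqdef
    have hqg : (a : ℕ∞) = gdist E s q := tight_prefix h'0 h'k h'w hwg (by omega)
    have hav : ∀ (wv : ℕ → V), wv 0 = s → wv a = q → IsWalk E a wv →
        ∀ i ≤ a, wv i ∉ C ∧ wv i ∉ D := by
      intro wv h1 h2 h3 i hia
      rcases Nat.eq_zero_or_pos i with h0 | h0
      · subst h0; rw [h1]; exact ⟨hsC, hsD⟩
      by_contra hc
      have hCD : wv i ∈ C ∨ wv i ∈ D := by tauto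
      have hQa : wv a = w' a := by rw [h2, hqdef]
      have hsw := spl_isWalk (i := a) h3 h'w (by omega) hQa
      rw [show a + (k₀ - a) = k₀ by omega] at hsw
      have h0' : spl wv w' a a 0 = s := by rw [spl_zero hQa, h1]
      have hk' : spl wv w' a a k₀ = t := by
        have := spl_last (Q := wv) (W := w') (a := a) (i := a) (k := k₀) (by omega)
        rw [show a + (k₀ - a) = k₀ by omega] at this
        rw [this, h'k]
      have hval : spl wv w' a a i = wv i := spl_left hQa i hia
      have hHiti : Hit i := ⟨h0, by omega, spl wv w' a a, h0', hk', hsw, by rw [hval]; exact hCD⟩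
      exact Nat.find_min hex (show i < j₀ by omega) hHiti
    obtain ⟨p, hp, hplen⟩ := getPath q a (by omega) hqg hav
    obtain ⟨hpv0, hpvlen, -⟩ := hπ' s q p hp
    rw [hplen] at hpvlen
    have hQa : p.vtx a = w' a := by rw [hpvlen, hqdef]
    have hpw : IsWalk E a p.vtx := hplen ▸ p.isWalk
    have hsw := spl_isWalk (i := a) hpw h'w (by omega) hQa
    rw [show a + (k₀ - a) = k₀ by omega] at hsw
    have h0' : spl p.vtx w' a a 0 = s := by rw [spl_zero hQa, hpv0]
    have hk' : spl p.vtx w' a a k₀ = t := by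
      have := spl_last (Q := p.vtx) (W := w') (a := a) (i := a) (k := k₀) (by omega)
      rw [show a + (k₀ - a) = k₀ by omega] at this
      rw [this, h'k]
    refine ⟨k₀, spl p.vtx w' a a, h0', hk', hsw, hwg,
      Or.inr ⟨j₀, hj₀1, hj₀k, Or.inr ⟨q, w' j₀, ?_, ?_, p, hp, by omega, ?_, ?_⟩⟩⟩
    · rcases h'CD with hc | hc
      · exact Or.inl hc
      · exact Or.inr (Or.inl hc)
    · have := h'w a (by omega)
      rw [show a + 1 = j₀ by omega] at this
      rw [hqdef]
      exact this
    · intro i hi'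
      rw [hplen] at hi'
      exact spl_left hQa i hi'
    · rw [spl_right j₀ (by omega)]
      congr 1
      omega
  · -- Case II: no shortest walk meets `C ∪ D` within the first `h` steps.
    push_neg at hcase
    have hnoHit : ∀ j, 1 ≤ j → j ≤ k₀ → j ≤ h → ∀ w : ℕ → V,
        w 0 = s → w k₀ = t → IsWalk E k₀ w → w j ∉ C ∧ w j ∉ D := by
      intro j h1 h2 h3 w hw1 hw2 hw3
      constructor
      · intro hmem; exact hcase j h3 ⟨h1, h2, w, hw1, hw2, hw3, Or.inl hmem⟩
      · intro hmem; exact hcase j h3 ⟨h1, h2, w, hw1, hw2, hw3, Or.inr hmem⟩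
    -- Avoidance holds for prefixes (of length ≤ h) of any shortest `s → t` walk.
    have mkAv : ∀ (W : ℕ → V), W 0 = s → W k₀ = t → IsWalk E k₀ W →
        ∀ (a : ℕ), a ≤ k₀ → a ≤ h →
        ∀ (wv : ℕ → V), wv 0 = s → wv a = W a → IsWalk E a wv →
        ∀ i ≤ a, wv i ∉ C ∧ wv i ∉ D := by
      intro W hW0 hWk hWw a hak hah wv h1 h2 h3 i hia
      rcases Nat.eq_zero_or_pos i with h0 | h0
      · subst h0; rw [h1]; exact ⟨hsC, hsD⟩
      have hsw := spl_isWalk (i := a) h3 hWw hak h2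
      rw [show a + (k₀ - a) = k₀ by omega] at hsw
      have h0' : spl wv W a a 0 = s := by rw [spl_zero h2, h1]
      have hk' : spl wv W a a k₀ = t := by
        have := spl_last (Q := wv) (W := W) (a := a) (i := a) (k := k₀) hak
        rw [show a + (k₀ - a) = k₀ by omega] at this
        rw [this, hWk]
      have hval : spl wv W a a i = wv i := spl_left h2 i hia
      have := hnoHit i h0 (by omega) (by omega) (spl wv W a a) h0' hk' hsw
      rw [hval] at this
      exact this
    set b := min k₀ h with hbdef
    have hbk : b ≤ k₀ := min_le_left _ _
    have hbh : b ≤ h := min_le_right _ _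
    set u := w₀ b with hudef
    have hug : (b : ℕ∞) = gdist E s u := tight_prefix hw0 hwk hww hwg hbk
    obtain ⟨p, hp, hplen⟩ := getPath u b hbh hug
      (fun wv h1 h2 h3 => mkAv w₀ hw0 hwk hww b hbk hbh wv h1 (by rw [h2, hudef]) h3)
    obtain ⟨hpv0, hpvlen, -⟩ := hπ' s u p hp
    rw [hplen] at hpvlen
    by_cases hblth : b < h
    · -- Then `b = k₀` and `u = t`: conclusion (a).
      have hbk0 : b = k₀ := by omega
      have hut : u = t := by rw [hudef, hbk0, hwk]
      refine ⟨k₀, p.vtx, hpv0, by rw [← hbk0, hpvlen, hut], ?_, hwg,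
        Or.inl ⟨p, by rw [← hut]; exact hp, by rw [hplen, hbk0], fun i _ => rfl⟩⟩
      have := p.isWalk
      rwa [hplen, hbk0] at this
    · have hbh' : b = h := by omega
      obtain ⟨i, hih, hiH⟩ := hii s u p hp (hplen.trans hbh')
      rw [hplen] at hih
      have hi1 : 1 ≤ i := by
        rcases Nat.eq_zero_or_pos i with h0 | h0
        · subst h0; rw [hpv0] at hiH; exact absurd hiH hsH
        · exact h0
      have hQa : p.vtx b = w₀ b := by rw [hpvlen, hudef]
      have hpw : IsWalk E b p.vtx := hplen ▸ p.isWalk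
      have hW2w : IsWalk E k₀ (spl p.vtx w₀ b b) := by
        have := spl_isWalk (i := b) hpw hww hbk hQa
        rwa [show b + (k₀ - b) = k₀ by omega] at this
      have hW20 : spl p.vtx w₀ b b 0 = s := by rw [spl_zero hQa, hpv0]
      have hW2k : spl p.vtx w₀ b b k₀ = t := by
        have := spl_last (Q := p.vtx) (W := w₀) (a := b) (i := b) (k := k₀) hbk
        rw [show b + (k₀ - b) = k₀ by omega] at this
        rw [this, hwk]
      have hW2left : ∀ j ≤ b, spl p.vtx w₀ b b j = p.vtx j := spl_left hQa
      by_cases hib : i = b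
      · -- The `H`-vertex is the endpoint `u`: prefix of length `b` is `π'_{s,u}`.
        refine ⟨k₀, spl p.vtx w₀ b b, hW20, hW2k, hW2w, hwg,
          Or.inr ⟨b, by omega, hbk, Or.inl ⟨u, Or.inr (Or.inr ?_), p, hp, hplen,
            fun j hj => hW2left j hj⟩⟩⟩
        rw [← hpvlen, ← hib]
        exact hiH
      · -- The `H`-vertex `r = p.vtx i` is interior: prefix of length `i` is `π'_{s,r}`.
        have hiltb : i < b := by omega
        set r := p.vtx i with hrdef
        have hW2i : spl p.vtx w₀ b b i = r := hW2left i (by omega)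
        have hrg : (i : ℕ∞) = gdist E s r := by
          have := tight_prefix hW20 hW2k hW2w hwg (show i ≤ k₀ by omega)
          rwa [hW2i] at this
        obtain ⟨p₂, hp₂, hp₂len⟩ := getPath r i (by omega) hrg
          (fun wv h1 h2 h3 => mkAv (spl p.vtx w₀ b b) hW20 hW2k hW2w i (by omega) (by omega)
            wv h1 (by rw [h2, hW2i]) h3)
        obtain ⟨hp₂0, hp₂end, -⟩ := hπ' s r p₂ hp₂
        rw [hp₂len] at hp₂end
        have hQa₂ : p₂.vtx i = spl p.vtx w₀ b b i := by rw [hp₂end, hW2i]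
        have hp₂w : IsWalk E i p₂.vtx := hp₂len ▸ p₂.isWalk
        have hW3w : IsWalk E k₀ (spl p₂.vtx (spl p.vtx w₀ b b) i i) := by
          have := spl_isWalk (i := i) hp₂w hW2w (by omega) hQa₂
          rwa [show i + (k₀ - i) = k₀ by omega] at this
        have hW30 : spl p₂.vtx (spl p.vtx w₀ b b) i i 0 = s := by rw [spl_zero hQa₂, hp₂0]
        have hW3k : spl p₂.vtx (spl p.vtx w₀ b b) i i k₀ = t := by
          have := spl_last (Q := p₂.vtx) (W := spl p.vtx w₀ b b) (a := i) (i := i) (k := k₀)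
            (by omega)
          rw [show i + (k₀ - i) = k₀ by omega] at this
          rw [this, hW2k]
        refine ⟨k₀, spl p₂.vtx (spl p.vtx w₀ b b) i i, hW30, hW3k, hW3w, hwg,
          Or.inr ⟨i, hi1, by omega, Or.inl ⟨r, Or.inr (Or.inr hiH), p₂, hp₂, hp₂len,
            fun j hj => spl_left hQa₂ j hj⟩⟩⟩

end Paper
end

section
/- Let G = (V,E) be a directed graph and W ⊆ V. Define the directed graph G_W on the vertex set consisting of two disjoint copies V⁺ = {v⁺ : v ∈ V} and V⁻ = {v⁻ : v ∈ V} of V, with edge set {(v⁺, v⁻) : v ∈ W} ∪ {(u⁻, v⁺) : (u,v) ∈ E}. Then: (1) every walk in G_W between two vertices of V⁺ has even length; (2) for all s,t ∈ V and k ≥ 0, the walks of length 2k from s⁺ to t⁺ in G_W are in bijection with the walks v_0 = s, v_1, …, v_k = t of length k in G satisfying v_0, …, v_{k−1} ∈ W; (3) consequently, for all s,t ∈ W and every integer h ≥ 0, δ_{G[W]}^h(s,t) < ∞ if and only if δ_{G_W}^{2h}(s⁺,t⁺) < ∞, and in that case δ_{G_W}^{2h}(s⁺,t⁺) = 2·δ_{G[W]}^h(s,t).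 -/
open scoped Classical

namespace Paper

variable {V : Type*}

/-- The induced subgraph `G[W]`. -/
def induce (E : V → V → Prop) (W : Set V) : V → V → Prop :=
  fun u v => E u v ∧ u ∈ W ∧ v ∈ W

/-- The split graph `G_W` on two copies of `V`: `Sum.inl v = v⁺`, `Sum.inr v = v⁻`;
edges `v⁺ → v⁻` for `v ∈ W` and `u⁻ → v⁺` for `(u,v) ∈ E`. -/
def splitW (E : V → V → Prop) (W : Set V) : (V ⊕ V) → (V ⊕ V) → Prop :=
  fun a b =>
    match a, b with
    | Sum.inl u, Sum.inr v => u = v ∧ u ∈ W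
    | Sum.inr u, Sum.inl v => E u v
    | _, _ => False

lemma shape {E : V → V → Prop} {W : Set V} {k : ℕ} {p : ℕ → V ⊕ V} {s : V}
    (h0 : p 0 = Sum.inl s) (hw : IsWalk (splitW E W) k p) :
    ∀ j, j ≤ k → (Even j → ∃ v, p j = Sum.inl v) ∧ (¬ Even j → ∃ v, p j = Sum.inr v) := by
  intro j
  induction j with
  | zero => exact fun _ => ⟨fun _ => ⟨s, h0⟩, fun h => absurd Even.zero h⟩
  | succ j ih =>
    intro hj
    have edge := hw j (by omega)
    obtain ⟨h1, h2⟩ := ih (by omega)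
    by_cases he : Even j
    · obtain ⟨v, hv⟩ := h1 he
      refine ⟨fun h => absurd he (by simpa [Nat.even_add_one] using h), fun _ => ?_⟩
      rw [hv] at edge
      rcases hq : p (j+1) with w | w
      · rw [hq] at edge; exact edge.elim
      · exact ⟨w, rfl⟩
    · obtain ⟨v, hv⟩ := h2 he
      refine ⟨fun _ => ?_, fun h => absurd (by simpa [Nat.even_add_one] using he) h⟩
      rw [hv] at edge
      rcases hq : p (j+1) with w | w
      · exact ⟨w, rfl⟩
      · rw [hq] at edge; exact edge.elim

lemma fwd {E : V → V → Prop} {W : Set V} {k : ℕ} {q : ℕ → V} {s t : V}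
    (hq0 : q 0 = s) (hqk : q k = t) (hw : IsWalk (induce E W) k q) :
    ∃ p : ℕ → V ⊕ V, p 0 = Sum.inl s ∧ p (2*k) = Sum.inl t ∧
      IsWalk (splitW E W) (2*k) p := by
  refine ⟨fun j => if Even j then Sum.inl (q (j/2)) else Sum.inr (q (j/2)),
    by simp [hq0], by simp [Nat.mul_div_cancel_left, hqk], ?_⟩
  intro j hj
  by_cases he : Even j
  · have hj2 : j % 2 = 0 := Nat.even_iff.mp he
    have he1 : ¬ Even (j+1) := by rw [Nat.even_iff]; omega
    have h2 : (j+1)/2 = j/2 := by omega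
    simp only [if_pos he, if_neg he1, h2]
    exact (⟨rfl, (hw (j/2) (by omega)).2.1⟩ : q (j/2) = q (j/2) ∧ q (j/2) ∈ W)
  · have hj2 : j % 2 = 1 := Nat.odd_iff.mp (Nat.not_even_iff_odd.mp he)
    have he1 : Even (j+1) := by rw [Nat.even_iff]; omega
    have h2 : (j+1)/2 = j/2 + 1 := by omega
    simp only [if_neg he, if_pos he1, h2]
    exact ((hw (j/2) (by omega)).1 : E (q (j/2)) (q (j/2+1)))

lemma bwd {E : V → V → Prop} {W : Set V} {m : ℕ} {p : ℕ → V ⊕ V} {s t : V}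
    (h0 : p 0 = Sum.inl s) (hm : p m = Sum.inl t) (hw : IsWalk (splitW E W) m p)
    (ht : t ∈ W) :
    ∃ k, m = 2*k ∧ ∃ q : ℕ → V, q 0 = s ∧ q k = t ∧ IsWalk (induce E W) k q := by
  have hsh := shape h0 hw
  have hev : Even m := by
    by_contra h
    obtain ⟨v, hv⟩ := (hsh m le_rfl).2 h
    rw [hm] at hv; exact Sum.inl_ne_inr hv
  obtain ⟨k, hk⟩ := hev
  have hmk : m = 2*k := by omega
  subst hmk
  refine ⟨k, rfl, fun i => Sum.elim id id (p (2*i)), by simp [h0], by simp [hm], ?_⟩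
  intro i hi
  obtain ⟨u, hu⟩ := (hsh (2*i) (by omega)).1 ⟨i, by ring⟩
  obtain ⟨w, hww⟩ := (hsh (2*i+1) (by omega)).2 (by rw [Nat.even_iff]; omega)
  obtain ⟨v, hv⟩ := (hsh (2*i+2) (by omega)).1 ⟨i+1, by ring⟩
  have e1 := hw (2*i) (by omega)
  rw [hu, hww] at e1
  have e1' : u = w ∧ u ∈ W := e1
  have e2 := hw (2*i+1) (by omega)
  rw [hww, hv] at e2
  have e2' : E w v := e2
  have hvW : v ∈ W := by
    rcases eq_or_lt_of_le (show i+1 ≤ k by omega) with h | h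
    · have h2 : 2*i+2 = 2*k := by omega
      rw [h2] at hv
      have : v = t := Sum.inl.inj (hv.symm.trans hm)
      rw [this]; exact ht
    · obtain ⟨w', hw'⟩ := (hsh (2*i+3) (by omega)).2 (by rw [Nat.even_iff]; omega)
      have e3 := hw (2*i+2) (by omega)
      rw [hv, hw'] at e3
      have e3' : v = w' ∧ v ∈ W := e3
      exact e3'.2
  show induce E W (Sum.elim id id (p (2*i))) (Sum.elim id id (p (2*(i+1))))
  have h22 : 2*(i+1) = 2*i+2 := by ring
  rw [h22, hu, hv]
  simp only [Sum.elim_inl, id]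
  obtain ⟨rfl, huW⟩ := e1'
  exact ⟨e2', huW, hvW⟩

lemma bdist_ne_top_iff {E : V → V → Prop} {h : ℕ} {s t : V} :
    bdist E h s t ≠ ⊤ ↔ ∃ k, k ≤ h ∧ ∃ p : ℕ → V, p 0 = s ∧ p k = t ∧ IsWalk E k p := by
  simp [bdist, iInf_eq_top]

lemma bdist_eq {E : V → V → Prop} {h : ℕ} {s t : V} {k0 : ℕ}
    (h1 : k0 ≤ h ∧ ∃ p : ℕ → V, p 0 = s ∧ p k0 = t ∧ IsWalk E k0 p)
    (h2 : ∀ k, (k ≤ h ∧ ∃ p : ℕ → V, p 0 = s ∧ p k = t ∧ IsWalk E k p) → k0 ≤ k) :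
    bdist E h s t = (k0 : ℕ∞) := by
  apply le_antisymm
  · exact iInf₂_le k0 h1
  · exact le_iInf₂ fun k hk => by exact_mod_cast h2 k hk


/-- Values and step facts of a split walk, at ℕ level. -/
lemma step2 {E : V → V → Prop} {W : Set V} {m : ℕ} {P : ℕ → V ⊕ V} {s : V}
    (h0 : P 0 = Sum.inl s) (hw : IsWalk (splitW E W) m P) {i : ℕ} (hi : 2*i+1 < m) :
    E (Sum.elim id id (P (2*i))) (Sum.elim id id (P (2*i+2))) ∧
      Sum.elim id id (P (2*i)) ∈ W := by
  obtain ⟨u, hu⟩ := (shape h0 hw (2*i) (by omega)).1 ⟨i, by ring⟩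
  obtain ⟨w, hww⟩ := (shape h0 hw (2*i+1) (by omega)).2 (by rw [Nat.even_iff]; omega)
  obtain ⟨v, hv⟩ := (shape h0 hw (2*i+2) (by omega)).1 ⟨i+1, by ring⟩
  have e1 := hw (2*i) (by omega)
  rw [hu, hww] at e1
  have e1' : u = w ∧ u ∈ W := e1
  have e2 := hw (2*i+1) (by omega)
  rw [hww, hv] at e2
  have e2' : E w v := e2
  rw [hu, hv]
  simp only [Sum.elim_inl, id]
  obtain ⟨rfl, huW⟩ := e1'
  exact ⟨e2', huW⟩

/-- Reconstruction of a split walk from its even positions. -/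
lemma recon {E : V → V → Prop} {W : Set V} {m : ℕ} {P : ℕ → V ⊕ V} {s : V}
    (h0 : P 0 = Sum.inl s) (hw : IsWalk (splitW E W) m P) {j : ℕ} (hj : j ≤ m) :
    (j % 2 = 0 → P j = Sum.inl (Sum.elim id id (P (2*(j/2))))) ∧
    (j % 2 = 1 → P j = Sum.inr (Sum.elim id id (P (2*(j/2))))) := by
  constructor
  · intro h2
    obtain ⟨v, hv⟩ := (shape h0 hw j hj).1 (Nat.even_iff.mpr h2)
    rw [show 2*(j/2) = j by omega, hv]
    rfl
  · intro h2
    obtain ⟨v, hv⟩ := (shape h0 hw (j-1) (by omega)).1 (by rw [Nat.even_iff]; omega)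
    obtain ⟨w, hww⟩ := (shape h0 hw j hj).2 (by rw [Nat.even_iff]; omega)
    have e1 := hw (j-1) (by omega)
    rw [hv, show j-1+1 = j by omega, hww] at e1
    have e1' : v = w ∧ v ∈ W := e1
    rw [show 2*(j/2) = j-1 by omega, hv, hww, e1'.1]
    rfl

/-- Membership in `W` at even positions strictly before an even endpoint. -/
lemma memW {E : V → V → Prop} {W : Set V} {m : ℕ} {P : ℕ → V ⊕ V} {s : V}
    (h0 : P 0 = Sum.inl s) (hw : IsWalk (splitW E W) m P) {i : ℕ} (hi : 2*i < m) :
    Sum.elim id id (P (2*i)) ∈ W := by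
  obtain ⟨u, hu⟩ := (shape h0 hw (2*i) (by omega)).1 ⟨i, by ring⟩
  obtain ⟨w, hww⟩ := (shape h0 hw (2*i+1) (by omega)).2 (by rw [Nat.even_iff]; omega)
  have e1 := hw (2*i) (by omega)
  rw [hu, hww] at e1
  have e1' : u = w ∧ u ∈ W := e1
  rw [hu]
  simpa using e1'.2

/-- Extend a walk on `Fin (n+1)` to `ℕ`. -/
lemma natify {A : Type*} {R : A → A → Prop} {n : ℕ} (p : Fin (n+1) → A)
    (he : ∀ i : Fin n, R (p i.castSucc) (p i.succ)) :
    ∃ P : ℕ → A, IsWalk R n P ∧ ∀ j (hj : j < n+1), P j = p ⟨j, hj⟩ := by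
  refine ⟨fun j => if h : j < n+1 then p ⟨j, h⟩ else p 0, ?_, ?_⟩
  · intro i hi
    simp only [dif_pos (show i < n+1 by omega), dif_pos (show i+1 < n+1 by omega)]
    exact he ⟨i, hi⟩
  · intro j hj
    simp only [dif_pos hj]


section Equivs
variable (E : V → V → Prop) (W : Set V) (k : ℕ) (s t : V)

def SplitWalks := {p : Fin (2 * k + 1) → V ⊕ V //
            p 0 = Sum.inl s ∧ p (Fin.last (2 * k)) = Sum.inl t ∧
            ∀ i : Fin (2 * k), splitW E W (p i.castSucc) (p i.succ)}

def GWalks := {q : Fin (k + 1) → V //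
            q 0 = s ∧ q (Fin.last k) = t ∧
            (∀ i : Fin k, E (q i.castSucc) (q i.succ)) ∧
            ∀ i : Fin (k + 1), (i : ℕ) < k → q i ∈ W}

variable {E W k s t}

def toQ (p : Fin (2*k+1) → V ⊕ V) : Fin (k+1) → V :=
  fun i => Sum.elim id id (p ⟨2*i.1, by have := i.2; omega⟩)

def toP (q : Fin (k+1) → V) : Fin (2*k+1) → V ⊕ V :=
  fun j => if j.1 % 2 = 0 then Sum.inl (q ⟨j.1/2, by have := j.2; omega⟩)
    else Sum.inr (q ⟨j.1/2, by have := j.2; omega⟩)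

lemma toQ_mem (p : SplitWalks E W k s t) :
    toQ p.1 0 = s ∧ toQ p.1 (Fin.last k) = t ∧
    (∀ i : Fin k, E (toQ p.1 i.castSucc) (toQ p.1 i.succ)) ∧
    ∀ i : Fin (k + 1), (i : ℕ) < k → toQ p.1 i ∈ W := by
  refine ⟨?_, ?_, ?_, ?_⟩
  case refine_1 =>
    show Sum.elim id id (p.1 ⟨2*(0:Fin (k+1)).1, _⟩) = s
    have h1 : (⟨2*(0:Fin (k+1)).1, by have := (0:Fin (k+1)).2; omega⟩ : Fin (2*k+1)) = 0 := by
      apply Fin.ext; simp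
    rw [h1, p.2.1]; rfl
  case refine_2 =>
    show Sum.elim id id (p.1 ⟨2*(Fin.last k).1, _⟩) = t
    have h1 : (⟨2*(Fin.last k).1, by have := (Fin.last k).2; omega⟩ : Fin (2*k+1)) = Fin.last (2*k) := by
      apply Fin.ext; simp [Fin.last]
    rw [h1, p.2.2.1]; rfl
  case refine_3 =>
    obtain ⟨p, h0, hl, he⟩ := p
    intro i
    obtain ⟨P, hPw, hPeq⟩ := natify p he
    have hP0 : P 0 = Sum.inl s := by
      rw [hPeq 0 (by omega), show (⟨0, by omega⟩ : Fin (2*k+1)) = 0 from Fin.ext (by simp), h0]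
    have key := (step2 hP0 hPw (i := i.1) (by have := i.2; omega)).1
    show E (Sum.elim id id (p ⟨2*i.castSucc.1, _⟩)) (Sum.elim id id (p ⟨2*i.succ.1, _⟩))
    rw [← hPeq (2*i.castSucc.1) (by have := i.2; simp [Fin.coe_castSucc]),
        ← hPeq (2*i.succ.1) (by have := i.2; simp [Fin.val_succ])]
    simp only [Fin.coe_castSucc, Fin.val_succ]
    rw [show 2*(i.1+1) = 2*i.1+2 by ring]
    exact key
  case refine_4 =>
    obtain ⟨p, h0, hl, he⟩ := p
    intro i hik
    obtain ⟨P, hPw, hPeq⟩ := natify p he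
    have hP0 : P 0 = Sum.inl s := by
      rw [hPeq 0 (by omega), show (⟨0, by omega⟩ : Fin (2*k+1)) = 0 from Fin.ext (by simp), h0]
    have key := memW hP0 hPw (i := i.1) (by omega)
    show Sum.elim id id (p ⟨2*i.1, _⟩) ∈ W
    rw [← hPeq (2*i.1) (by omega)]
    exact key

lemma toP_mem (q : GWalks E W k s t) :
    toP q.1 0 = Sum.inl s ∧ toP q.1 (Fin.last (2 * k)) = Sum.inl t ∧
    ∀ i : Fin (2 * k), splitW E W (toP q.1 i.castSucc) (toP q.1 i.succ) := by
  refine ⟨?_, ?_, ?_⟩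
  case refine_1 =>
    show (if (0:Fin (2*k+1)).1 % 2 = 0 then _ else _) = Sum.inl s
    rw [if_pos (by simp : (0:Fin (2*k+1)).1 % 2 = 0)]
    have h1 : (⟨(0:Fin (2*k+1)).1/2, by have := (0:Fin (2*k+1)).2; omega⟩ : Fin (k+1)) = 0 := by
      apply Fin.ext; simp
    rw [h1, q.2.1]
  case refine_2 =>
    show (if (Fin.last (2*k)).1 % 2 = 0 then _ else _) = Sum.inl t
    rw [if_pos (by simp [Fin.last] : (Fin.last (2*k)).1 % 2 = 0)]
    have h1 : (⟨(Fin.last (2*k)).1/2, by have := (Fin.last (2*k)).2; omega⟩ : Fin (k+1)) = Fin.last k := by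
      apply Fin.ext
      show (2*k)/2 = k
      omega
    rw [h1, q.2.2.1]
  case refine_3 =>
    obtain ⟨q, h0, hl, hE, hW⟩ := q
    intro i
    have hi := i.2
    have hcv : (i.castSucc : ℕ) = i.1 := rfl
    have hsv : (i.succ : ℕ) = i.1 + 1 := rfl
    show splitW E W (if (i.castSucc : ℕ) % 2 = 0 then _ else _) (if (i.succ : ℕ) % 2 = 0 then _ else _)
    by_cases hev : i.1 % 2 = 0
    · rw [if_pos (by rw [hcv]; omega : (i.castSucc : ℕ) % 2 = 0),
        if_neg (by rw [hsv]; omega : ¬ (i.succ : ℕ) % 2 = 0)]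
      have hidx : (⟨(i.succ : ℕ)/2, by have := i.2; omega⟩ : Fin (k+1)) = ⟨(i.castSucc : ℕ)/2, by have := i.2; omega⟩ := by
        apply Fin.ext; show (i.1+1)/2 = i.1/2; omega
      rw [hidx]
      exact (⟨rfl, hW ⟨(i.castSucc : ℕ)/2, by omega⟩ (by show i.1/2 < k; omega)⟩ :
        q ⟨(i.castSucc : ℕ)/2, _⟩ = q ⟨(i.castSucc : ℕ)/2, _⟩ ∧ q ⟨(i.castSucc : ℕ)/2, _⟩ ∈ W)
    · rw [if_neg (by rw [hcv]; omega : ¬ (i.castSucc : ℕ) % 2 = 0),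
        if_pos (by rw [hsv]; omega : (i.succ : ℕ) % 2 = 0)]
      have key := hE ⟨i.1/2, by omega⟩
      have hc : (Fin.castSucc ⟨i.1/2, by omega⟩ : Fin (k+1)) = ⟨(i.castSucc : ℕ)/2, by have := i.2; omega⟩ := rfl
      have hs : (Fin.succ ⟨i.1/2, by omega⟩ : Fin (k+1)) = ⟨(i.succ : ℕ)/2, by have := i.2; omega⟩ := by
        apply Fin.ext; show i.1/2 + 1 = (i.1+1)/2; omega
      rw [hc, hs] at key
      exact key

def toFunD (p : SplitWalks E W k s t) : GWalks E W k s t := ⟨toQ p.1, toQ_mem p⟩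
def invFunD (q : GWalks E W k s t) : SplitWalks E W k s t := ⟨toP q.1, toP_mem q⟩

lemma left_invD : Function.LeftInverse (invFunD (E := E) (W := W) (k := k) (s := s) (t := t)) toFunD := by
  intro p
  apply Subtype.ext
  funext j
  obtain ⟨p, h0, hl, he⟩ := p
  obtain ⟨P, hPw, hPeq⟩ := natify p he
  have hP0 : P 0 = Sum.inl s := by
    rw [hPeq 0 (by omega), show (⟨0, by omega⟩ : Fin (2*k+1)) = 0 from Fin.ext (by simp), h0]
  show toP (toQ p) j = p j
  have hj := j.2
  have hrec := recon hP0 hPw (j := j.1) (by omega)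
  show (if j.1 % 2 = 0 then Sum.inl (Sum.elim id id (p ⟨2*(j.1/2), _⟩))
        else Sum.inr (Sum.elim id id (p ⟨2*(j.1/2), _⟩))) = p j
  rw [← hPeq (2*(j.1/2)) (by omega), ← show P j.1 = p j from by
    rw [hPeq j.1 j.2]]
  by_cases hev : j.1 % 2 = 0
  · rw [if_pos hev]; exact (hrec.1 hev).symm
  · rw [if_neg hev]; exact (hrec.2 (by omega)).symm

lemma right_invD : Function.RightInverse (invFunD (E := E) (W := W) (k := k) (s := s) (t := t)) toFunD := by
  intro q
  apply Subtype.ext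
  funext i
  obtain ⟨q, h0, hl, hE, hW⟩ := q
  show toQ (toP q) i = q i
  show Sum.elim id id (if (2*i.1) % 2 = 0 then Sum.inl (q ⟨2*i.1/2, _⟩) else Sum.inr (q ⟨2*i.1/2, _⟩)) = q i
  rw [if_pos (by omega : (2*i.1) % 2 = 0)]
  have hidx : (⟨2*i.1/2, by have := i.2; omega⟩ : Fin (k+1)) = i := by
    apply Fin.ext; show 2*i.1/2 = i.1; omega
  rw [hidx]; rfl

end Equivs

lemma part2equiv (E : V → V → Prop) (W : Set V) (k : ℕ) (s t : V) :
    Nonempty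
        ({p : Fin (2 * k + 1) → V ⊕ V //
            p 0 = Sum.inl s ∧ p (Fin.last (2 * k)) = Sum.inl t ∧
            ∀ i : Fin (2 * k), splitW E W (p i.castSucc) (p i.succ)} ≃
         {q : Fin (k + 1) → V //
            q 0 = s ∧ q (Fin.last k) = t ∧
            (∀ i : Fin k, E (q i.castSucc) (q i.succ)) ∧
            ∀ i : Fin (k + 1), (i : ℕ) < k → q i ∈ W}) :=
  ⟨{ toFun := toFunD, invFun := invFunD, left_inv := left_invD, right_inv := right_invD }⟩


/-- **Lemma 4.6 (vertex splitting).** (1) Every walk of `G_W` between two vertices of `V⁺` has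
even length; (2) walks of length `2k` from `s⁺` to `t⁺` in `G_W` are in bijection with walks
`v_0 = s, …, v_k = t` of length `k` in `G` with `v_0, …, v_{k−1} ∈ W`; (3) hence for
`s, t ∈ W` and any `h ≥ 0`, `δ_{G[W]}^h(s,t) < ∞` iff `δ_{G_W}^{2h}(s⁺,t⁺) < ∞`, and then
`δ_{G_W}^{2h}(s⁺,t⁺) = 2·δ_{G[W]}^h(s,t)`. -/
theorem vertex_splitting {V : Type*} (E : V → V → Prop) (W : Set V) :
    (∀ (k : ℕ) (p : ℕ → V ⊕ V) (s t : V),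
        p 0 = Sum.inl s → p k = Sum.inl t → IsWalk (splitW E W) k p → Even k) ∧
    (∀ (k : ℕ) (s t : V),
      Nonempty
        ({p : Fin (2 * k + 1) → V ⊕ V //
            p 0 = Sum.inl s ∧ p (Fin.last (2 * k)) = Sum.inl t ∧
            ∀ i : Fin (2 * k), splitW E W (p i.castSucc) (p i.succ)} ≃
         {q : Fin (k + 1) → V //
            q 0 = s ∧ q (Fin.last k) = t ∧
            (∀ i : Fin k, E (q i.castSucc) (q i.succ)) ∧
            ∀ i : Fin (k + 1), (i : ℕ) < k → q i ∈ W})) ∧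
    (∀ (h : ℕ) (s t : V), s ∈ W → t ∈ W →
      (bdist (induce E W) h s t ≠ ⊤ ↔
        bdist (splitW E W) (2 * h) (Sum.inl s) (Sum.inl t) ≠ ⊤) ∧
      (bdist (induce E W) h s t ≠ ⊤ →
        bdist (splitW E W) (2 * h) (Sum.inl s) (Sum.inl t)
          = 2 * bdist (induce E W) h s t)) := by
  refine ⟨?_, ?_, ?_⟩
  · intro k p s t h0 hk hw
    by_contra hodd
    obtain ⟨v, hv⟩ := (shape h0 hw k le_rfl).2 hodd
    rw [hk] at hv
    exact Sum.inl_ne_inr hv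
  · intro k s t
    exact part2equiv E W k s t
  · intro h s t hs ht
    constructor
    · constructor
      · intro hne
        rw [bdist_ne_top_iff] at hne ⊢
        obtain ⟨k, hk, q, hq0, hqk, hqw⟩ := hne
        obtain ⟨p, h0, hk2, hw⟩ := fwd hq0 hqk hqw
        exact ⟨2*k, by omega, p, h0, hk2, hw⟩
      · intro hne
        rw [bdist_ne_top_iff] at hne ⊢
        obtain ⟨m, hm, p, h0, hmt, hw⟩ := hne
        obtain ⟨k', hk', q, hq0, hqk, hqw⟩ := bwd h0 hmt hw ht
        exact ⟨k', by omega, q, hq0, hqk, hqw⟩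
    · intro hne
      have hex : ∃ k, k ≤ h ∧ ∃ p : ℕ → V, p 0 = s ∧ p k = t ∧ IsWalk (induce E W) k p :=
        bdist_ne_top_iff.mp hne
      have h1 := Nat.find_spec hex
      have hmin : ∀ k, (k ≤ h ∧ ∃ p : ℕ → V, p 0 = s ∧ p k = t ∧ IsWalk (induce E W) k p) →
          Nat.find hex ≤ k := fun k hk => Nat.find_min' hex hk
      have hd : bdist (induce E W) h s t = (Nat.find hex : ℕ∞) := bdist_eq h1 hmin
      have hd2 : bdist (splitW E W) (2*h) (Sum.inl s) (Sum.inl t)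
          = ((2 * Nat.find hex : ℕ) : ℕ∞) := by
        apply bdist_eq
        · obtain ⟨hk, q, hq0, hqk, hqw⟩ := h1
          obtain ⟨p, h0, hk2, hw⟩ := fwd hq0 hqk hqw
          exact ⟨by omega, p, h0, hk2, hw⟩
        · rintro m ⟨hm, p, h0, hmt, hw⟩
          obtain ⟨k', hk', q, hq0, hqk, hqw⟩ := bwd h0 hmt hw ht
          have := hmin k' ⟨by omega, q, hq0, hqk, hqw⟩
          omega
      rw [hd, hd2]
      push_cast
      ring


end Paper
end

section
/- Let k ≥ 1, let a₁, …, a_k be positive integers with a₁ + ⋯ + a_k = n, and let d ≥ 1 be an integer. Then there exists a partition of {1, …, k} into m nonempty intervals of consecutive indices I₁, …, I_m (appearing in order) such that every interval I_j either consists of a single index or satisfies ∑_{i ∈ I_j} a_i ≤ d, and m ≤ 2n/d + 1. -/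
lemma block_aux (k : ℕ) : ∀ (a : ℕ → ℕ) (d : ℕ), 1 ≤ d →
    ∃ (m : ℕ) (b : ℕ → ℕ),
      b 0 = 0 ∧ b m = k ∧
      (∀ j < m, b j < b (j + 1)) ∧
      (∀ j < m, b (j + 1) = b j + 1 ∨ ∑ i ∈ Finset.Ico (b j) (b (j + 1)), a i ≤ d) ∧
      m * d ≤ 2 * (∑ i ∈ Finset.range k, a i) + d := by
  induction k using Nat.strong_induction_on with
  | _ k ih =>
  intro a d hd
  rcases Nat.eq_zero_or_pos k with hk0 | hk0
  · subst hk0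
    exact ⟨0, fun _ => 0, rfl, rfl, by simp, by simp, by simp⟩
  set S : ℕ → ℕ := fun t => ∑ i ∈ Finset.range t, a i with hS
  obtain ⟨e1, he1_pos, he1_le, hblk1, hkey⟩ :
      ∃ e1, 1 ≤ e1 ∧ e1 ≤ k ∧ (e1 = 1 ∨ S e1 ≤ d) ∧ (e1 < k → d < S (e1 + 1)) := by
    by_cases h : a 0 ≤ d
    · refine ⟨Nat.findGreatest (fun t => S t ≤ d) k, ?_, Nat.findGreatest_le k, ?_, ?_⟩
      · exact Nat.le_findGreatest hk0 (by simpa [hS] using h)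
      · exact Or.inr (Nat.findGreatest_spec (P := fun t => S t ≤ d) hk0
          (by simpa [hS] using h))
      · intro hlt
        have := Nat.findGreatest_is_greatest (P := fun t => S t ≤ d)
          (Nat.lt_succ_self (Nat.findGreatest (fun t => S t ≤ d) k)) (by omega)
        exact Nat.lt_of_not_le this
    · refine ⟨1, le_refl 1, hk0, Or.inl rfl, fun _ => ?_⟩
      have h2 : a 0 ≤ S (1 + 1) := by simp [hS, Finset.sum_range_succ]
      omega
  rcases eq_or_lt_of_le he1_le with heq | hlt
  · -- single block
    refine ⟨1, fun j => match j with | 0 => 0 | _ + 1 => k, rfl, rfl, ?_, ?_, ?_⟩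
    · intro j hj; interval_cases j; exact hk0
    · intro j hj; interval_cases j
      rcases hblk1 with h1 | h1
      · left; show k = 0 + 1; omega
      · right
        show ∑ i ∈ Finset.Ico 0 k, a i ≤ d
        have h2 : ∑ i ∈ Finset.range k, a i ≤ d := heq ▸ h1
        rwa [Finset.range_eq_Ico] at h2
    · have : 1 * d = d := one_mul d
      omega
  · -- recurse
    obtain ⟨m', b', h0, hk', hmono, hblk, hbound⟩ :=
      ih (k - (e1 + 1)) (by omega) (fun i => a (i + (e1 + 1))) d hd
    refine ⟨m' + 2,
      fun j => match j with | 0 => 0 | 1 => e1 | j + 2 => b' j + (e1 + 1),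
      rfl, ?_, ?_, ?_, ?_⟩
    · show b' m' + (e1 + 1) = k
      rw [hk']; omega
    · intro j hj
      match j with
      | 0 => exact he1_pos
      | 1 => show e1 < b' 0 + (e1 + 1); omega
      | (i + 2) =>
        show b' i + (e1 + 1) < b' (i + 1) + (e1 + 1)
        have := hmono i (by omega)
        omega
    · intro j hj
      match j with
      | 0 =>
        rcases hblk1 with h1 | h1
        · left; show e1 = 0 + 1; omega
        · right
          show ∑ i ∈ Finset.Ico 0 e1, a i ≤ d
          have h2 : ∑ i ∈ Finset.range e1, a i ≤ d := h1
          rwa [Finset.range_eq_Ico] at h2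
      | 1 =>
        left; show b' 0 + (e1 + 1) = e1 + 1; rw [h0]; omega
      | (i + 2) =>
        rcases hblk i (by omega) with h1 | h1
        · left; show b' (i + 1) + (e1 + 1) = (b' i + (e1 + 1)) + 1; omega
        · right
          show ∑ x ∈ Finset.Ico (b' i + (e1 + 1)) (b' (i + 1) + (e1 + 1)), a x ≤ d
          rw [Finset.sum_Ico_eq_sum_range] at h1 ⊢
          have hr : b' (i + 1) + (e1 + 1) - (b' i + (e1 + 1)) = b' (i + 1) - b' i := by omega
          rw [hr]
          refine le_trans (le_of_eq (Finset.sum_congr rfl fun x _ => ?_)) h1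
          congr 1
          omega
    · -- bound
      have hsplit : ∑ i ∈ Finset.range k, a i
          = S (e1 + 1) + ∑ i ∈ Finset.range (k - (e1 + 1)), a (i + (e1 + 1)) := by
        rw [hS]
        rw [← Finset.sum_range_add_sum_Ico a (by omega : e1 + 1 ≤ k)]
        congr 1
        rw [Finset.sum_Ico_eq_sum_range]
        exact Finset.sum_congr rfl fun x _ => by congr 1; omega
      have hd1 : d + 1 ≤ S (e1 + 1) := hkey hlt
      have hm : (m' + 2) * d = m' * d + 2 * d := by ring
      omega

/-- **Block partition (Section 7).** Given positive integers `a 0, …, a (k−1)` summing to `n`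
and `d ≥ 1`, there is a partition of `{0,…,k−1}` into `m` consecutive nonempty intervals
`[b j, b (j+1))` (given by breakpoints `0 = b 0 < b 1 < ⋯ < b m = k`) such that every
interval is a single index or has weight at most `d`, and `m ≤ 2n/d + 1`. -/
theorem block_partition (k n d : ℕ) (hk : 1 ≤ k) (hd : 1 ≤ d)
    (a : ℕ → ℕ) (hpos : ∀ i < k, 1 ≤ a i)
    (hsum : ∑ i ∈ Finset.range k, a i = n) :
    ∃ (m : ℕ) (b : ℕ → ℕ),
      b 0 = 0 ∧ b m = k ∧
      (∀ j < m, b j < b (j + 1)) ∧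
      (∀ j < m, b (j + 1) = b j + 1 ∨ ∑ i ∈ Finset.Ico (b j) (b (j + 1)), a i ≤ d) ∧
      (m : ℝ) ≤ 2 * (n : ℝ) / (d : ℝ) + 1 := by
  obtain ⟨m, b, h0, hm, hmono, hblk, hbound⟩ := block_aux k a d hd
  refine ⟨m, b, h0, hm, hmono, hblk, ?_⟩
  rw [hsum] at hbound
  have hd0 : (0 : ℝ) < d := by exact_mod_cast hd
  rw [show 2 * (n : ℝ) / d + 1 = (2 * n + d) / d by field_simp, le_div_iff₀ hd0]
  exact_mod_cast hbound
end
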